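/- arXiv:2301.03243 — 4 statements merged into one kernel-verified Lean document; each statement's English description precedes it below -/
import Mathlib

section
/- Let (X, τ) be an elcs. Then τ is induced by the family of extended seminorms {ρ_A : A ⊆ X* equicontinuous on (X, τ)}, where ρ_A(x) = sup_{f∈A} |f(x)|. -/
open scoped ENNReal Pointwise
open TopologicalSpace

section ElcsDefs

variable {X : Type*} [AddCommGroup X] [Module ℝ X]

/-- An extended seminorm: absolutely homogeneous (with `∞·0 = 0` conventions of `ℝ≥0∞`)
and subadditive map into `[0,∞]`. -/
def IsExtSeminorm (ρ : X → ℝ≥0∞) : Prop :=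
  (∀ (a : ℝ) (x : X), ρ (a • x) = ENNReal.ofReal |a| * ρ x) ∧
  (∀ x y : X, ρ (x + y) ≤ ρ x + ρ y)

/-- An extended norm is a definite extended seminorm. -/
def IsExtNorm (ρ : X → ℝ≥0∞) : Prop :=
  IsExtSeminorm ρ ∧ ∀ x : X, ρ x = 0 → x = 0

/-- The topology induced by a family of extended seminorms: generated by all balls. -/
def elcsTopology (P : Set (X → ℝ≥0∞)) : TopologicalSpace X :=
  TopologicalSpace.generateFrom
    {s | ∃ ρ ∈ P, ∃ c : X, ∃ ε : ℝ≥0∞, 0 < ε ∧ s = {x | ρ (x - c) < ε}}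

/-- `(X, t)` is an extended locally convex space with defining family `P`. -/
def IsELCS (t : TopologicalSpace X) (P : Set (X → ℝ≥0∞)) : Prop :=
  (∀ ρ ∈ P, IsExtSeminorm ρ) ∧ t = elcsTopology P

theorem IsExtSeminorm.map_zero {ρ : X → ℝ≥0∞} (h : IsExtSeminorm ρ) : ρ 0 = 0 := by
  have h0 := h.1 0 0
  simpa using h0

/-- The finiteness subspace `X_fin^ρ = {x : ρ x < ∞}` of an extended seminorm. -/
def finSubmodule {ρ : X → ℝ≥0∞} (h : IsExtSeminorm ρ) : Submodule ℝ X where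
  carrier := {x | ρ x < ⊤}
  add_mem' := fun {x y} hx hy =>
    lt_of_le_of_lt (h.2 x y) (ENNReal.add_lt_top.2 ⟨hx, hy⟩)
  zero_mem' := by simp [Set.mem_setOf_eq, h.map_zero]
  smul_mem' := fun a x hx => by
    simp only [Set.mem_setOf_eq, h.1 a x]
    exact ENNReal.mul_lt_top ENNReal.ofReal_lt_top hx

/-- The finite subspace `X_fin` of an elcs: points where every continuous extended
seminorm is finite. -/
def XfinSubmodule (t : TopologicalSpace X) : Submodule ℝ X where
  carrier := {x | ∀ ρ : X → ℝ≥0∞, IsExtSeminorm ρ → @Continuous X ℝ≥0∞ t _ ρ → ρ x < ⊤}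
  add_mem' := fun {x y} hx hy ρ hρ hc =>
    lt_of_le_of_lt (hρ.2 x y) (ENNReal.add_lt_top.2 ⟨hx ρ hρ hc, hy ρ hρ hc⟩)
  zero_mem' := by
    intro ρ hρ _
    rw [hρ.map_zero]
    exact ENNReal.zero_lt_top
  smul_mem' := fun a x hx ρ hρ hc => by
    have h1 := hρ.1 a x
    rw [h1]
    exact ENNReal.mul_lt_top ENNReal.ofReal_lt_top (hx ρ hρ hc)

/-- The continuous dual of `(X, t)` as a submodule of the linear dual. -/
noncomputable def dualSubmodule (t : TopologicalSpace X) : Submodule ℝ (X →ₗ[ℝ] ℝ) where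
  carrier := {f | @Continuous X ℝ t _ fun x => f x}
  add_mem' := by
    intro f g hf hg
    simp only [Set.mem_setOf_eq, LinearMap.add_apply] at *
    exact hf.add hg
  zero_mem' := by
    simp only [Set.mem_setOf_eq, LinearMap.zero_apply]
    exact @continuous_const X ℝ t _ 0
  smul_mem' := by
    intro c f hf
    simp only [Set.mem_setOf_eq, LinearMap.smul_apply, smul_eq_mul] at *
    exact (@continuous_const X ℝ t _ c).mul hf

/-- The weak topology of `(X, t)`: the initial topology induced by the continuous dual. -/
def weakTopology (t : TopologicalSpace X) : TopologicalSpace X :=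
  ⨅ f : ↥(dualSubmodule t), TopologicalSpace.induced (fun x => f.1 x) inferInstance

/-- The weak* topology on the dual of `(X, t)`: pointwise convergence on `X`. -/
def weakStarTopology (t : TopologicalSpace X) : TopologicalSpace ↥(dualSubmodule t) :=
  ⨅ x : X, TopologicalSpace.induced (fun f : ↥(dualSubmodule t) => f.1 x) inferInstance

/-- `tF` is the finest locally convex (vector) topology on `X` coarser than `t`. -/
def IsFlcTopology (t tF : TopologicalSpace X) : Prop :=
  t ≤ tF ∧ @IsTopologicalAddGroup X tF _ ∧ @ContinuousSMul ℝ X _ _ tF ∧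
    @LocallyConvexSpace ℝ X _ _ _ _ tF ∧
    ∀ t' : TopologicalSpace X, t ≤ t' → @IsTopologicalAddGroup X t' _ →
      @ContinuousSMul ℝ X _ _ t' → @LocallyConvexSpace ℝ X _ _ _ _ t' → tF ≤ t'

/-- A set `A` is bounded in an elcs: for every neighborhood `U` of `0` there are `r > 0`
and a finite `F ⊆ A` with `A ⊆ F + r • U`. -/
def ElcsBounded (t : TopologicalSpace X) (A : Set X) : Prop :=
  ∀ U ∈ @nhds X t 0, ∃ r : ℝ, 0 < r ∧ ∃ F : Set X, F.Finite ∧ F ⊆ A ∧ A ⊆ F + r • U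

/-- `0 ∈ Core U`: `U` absorbs every point of `X`. -/
def ZeroInCore (U : Set X) : Prop :=
  ∀ x : X, ∃ δ : ℝ, 0 < δ ∧ ∀ s : ℝ, 0 ≤ s → s ≤ δ → s • x ∈ U

/-- A family of linear functionals is equicontinuous on `(X, t)` if it is uniformly bounded
by `1` on some neighborhood of `0`. -/
def EquicontSet (t : TopologicalSpace X) (A : Set (X →ₗ[ℝ] ℝ)) : Prop :=
  ∃ U ∈ @nhds X t 0, ∀ f ∈ A, ∀ x ∈ U, |f x| ≤ 1

/-- The extended-seminorm-valued sup functional `ρ_A(x) = sup_{f ∈ A} |f x|`. -/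
noncomputable def dualSupFun (A : Set (X →ₗ[ℝ] ℝ)) : X → ℝ≥0∞ :=
  fun x => ⨆ f ∈ A, ENNReal.ofReal |f x|

/-- The topology on the dual of uniform convergence on members of a family `𝔅` of subsets
of `X`. -/
def ucTopology (t : TopologicalSpace X) (𝔅 : Set (Set X)) :
    TopologicalSpace ↥(dualSubmodule t) :=
  TopologicalSpace.generateFrom
    {s | ∃ B ∈ 𝔅, ∃ g : ↥(dualSubmodule t), ∃ ε : ℝ≥0∞, 0 < ε ∧
      s = {f | (⨆ x ∈ B, ENNReal.ofReal |f.1 x - g.1 x|) < ε}}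

/-- A vector topology is normable if it is induced by a single everywhere-finite
extended norm, i.e. by a norm. -/
def IsNormableTop {Y : Type*} [AddCommGroup Y] [Module ℝ Y] (t : TopologicalSpace Y) : Prop :=
  ∃ ρ : Y → ℝ≥0∞, IsExtNorm ρ ∧ (∀ y, ρ y < ⊤) ∧ t = elcsTopology {ρ}

/-- `Y` has countable (algebraic) dimension over `ℝ`. -/
def HasCountableDim (Y : Type*) [AddCommGroup Y] [Module ℝ Y] : Prop :=
  ∃ s : Set Y, s.Countable ∧ Submodule.span ℝ s = ⊤

/-- The Minkowski functional of a set, with values in `[0,∞]` (`inf ∅ = ∞`). -/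
noncomputable def minkowskiE (U : Set X) : X → ℝ≥0∞ :=
  fun x => sInf (ENNReal.ofReal '' {r : ℝ | 0 < r ∧ x ∈ r • U})

end ElcsDefs

section FunctionSpaces

variable {Y : Type*} [TopologicalSpace Y]

/-- The subspace of continuous functions that are bounded on `B`. -/
def boundedOnSubmodule (B : Set Y) : Submodule ℝ C(Y, ℝ) where
  carrier := {f | ∃ M : ℝ, ∀ x ∈ B, |f x| ≤ M}
  add_mem' := by
    rintro f g ⟨M, hM⟩ ⟨N, hN⟩
    exact ⟨M + N, fun x hx => (abs_add_le _ _).trans (add_le_add (hM x hx) (hN x hx))⟩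
  zero_mem' := ⟨0, by simp⟩
  smul_mem' := by
    rintro c f ⟨M, hM⟩
    refine ⟨|c| * M, fun x hx => ?_⟩
    simp only [ContinuousMap.smul_apply, smul_eq_mul, abs_mul]
    exact mul_le_mul_of_nonneg_left (hM x hx) (abs_nonneg c)

/-- The sup extended seminorm `ρ_B` on `C(Y, ℝ)` associated to `B ⊆ Y`. -/
noncomputable def supExtSeminorm (B : Set Y) : C(Y, ℝ) → ℝ≥0∞ :=
  fun f => ⨆ x ∈ B, ENNReal.ofReal |f x|

end FunctionSpaces


section Proof15

open ENNReal Topology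

variable {X : Type*} [AddCommGroup X] [Module ℝ X]

lemma dualSupFun_isExtSeminorm (A : Set (X →ₗ[ℝ] ℝ)) : IsExtSeminorm (dualSupFun A) := by
  constructor
  · intro a x
    unfold dualSupFun
    simp_rw [LinearMap.map_smul, smul_eq_mul, abs_mul,
      ENNReal.ofReal_mul (abs_nonneg a), ENNReal.mul_iSup]
  · intro x y
    refine iSup₂_le fun f hf => ?_
    calc ENNReal.ofReal |f (x + y)| ≤ ENNReal.ofReal (|f x| + |f y|) := by
          rw [map_add]; exact ENNReal.ofReal_le_ofReal (abs_add_le _ _)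
      _ ≤ ENNReal.ofReal |f x| + ENNReal.ofReal |f y| := ENNReal.ofReal_add_le
      _ ≤ dualSupFun A x + dualSupFun A y :=
          add_le_add (le_iSup₂ (f := fun g (_ : g ∈ A) => ENNReal.ofReal |g x|) f hf)
            (le_iSup₂ (f := fun g (_ : g ∈ A) => ENNReal.ofReal |g y|) f hf)

lemma IsExtSeminorm.map_neg {ρ : X → ℝ≥0∞} (h : IsExtSeminorm ρ) (x : X) : ρ (-x) = ρ x := by
  have := h.1 (-1) x
  simpa using this

lemma exists_extend (V : Submodule ℝ X) (g : ↥V →ₗ[ℝ] ℝ) :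
    ∃ F : X →ₗ[ℝ] ℝ, ∀ v : ↥V, F v = g v := by
  obtain ⟨C, hC⟩ := V.exists_isCompl
  exact ⟨g.comp (V.projectionOnto C hC), fun v => by
    simp [Submodule.projectionOnto_apply_left hC v]⟩

lemma exists_functional {v : X} (hv : v ≠ 0) (M : ℝ) : ∃ F : X →ₗ[ℝ] ℝ, F v = M := by
  obtain ⟨F, hF⟩ := exists_extend (Submodule.span ℝ {v})
      (LinearPMap.mkSpanSingleton v M hv).toFun
  refine ⟨F, ?_⟩
  have h1 := hF ⟨v, Submodule.mem_span_singleton_self v⟩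
  rw [h1]
  exact LinearPMap.mkSpanSingleton_apply ℝ ℝ hv M

/-- Hahn–Banach for extended seminorms: `ρ x = sup {|f x| : |f| ≤ ρ}`. -/
lemma extSeminorm_eq_dualSupFun {ρ : X → ℝ≥0∞} (hρ : IsExtSeminorm ρ) (x : X) :
    ρ x = dualSupFun {f : X →ₗ[ℝ] ℝ | ∀ y, ENNReal.ofReal |f y| ≤ ρ y} x := by
  set A := {f : X →ₗ[ℝ] ℝ | ∀ y, ENNReal.ofReal |f y| ≤ ρ y} with hA
  refine le_antisymm ?_ (iSup₂_le fun f hf => hf x)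
  by_cases hfin : ρ x < ⊤
  · rcases eq_or_ne (ρ x) 0 with h0 | h0
    · simp [h0]
    · -- 0 < ρ x < ⊤ : use Hahn-Banach on the finiteness subspace
      set V := finSubmodule hρ with hV
      have hxV : x ∈ V := hfin
      set x' : ↥V := ⟨x, hxV⟩ with hx'
      set r : ℝ := (ρ x).toReal with hr
      have hrpos : 0 < r := ENNReal.toReal_pos h0 hfin.ne
      have hx'0 : x' ≠ 0 := by
        intro h
        apply h0
        have : x = 0 := congrArg Subtype.val h
        rw [this, hρ.map_zero]
      set N : ↥V → ℝ := fun v => (ρ v).toReal with hN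
      have hNfin : ∀ v : ↥V, ρ (v : X) ≠ ⊤ := fun v => v.2.ne
      have N_hom : ∀ c : ℝ, 0 < c → ∀ v : ↥V, N (c • v) = c * N v := by
        intro c hc v
        have : ((c • v : ↥V) : X) = c • (v : X) := rfl
        simp only [hN, this, hρ.1 c]
        rw [ENNReal.toReal_mul, ENNReal.toReal_ofReal (abs_nonneg c), abs_of_pos hc]
      have N_add : ∀ v w : ↥V, N (v + w) ≤ N v + N w := by
        intro v w
        have h1 : ((v + w : ↥V) : X) = (v : X) + (w : X) := rfl
        simp only [hN, h1]
        rw [← ENNReal.toReal_add (hNfin v) (hNfin w)]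
        refine (ENNReal.toReal_le_toReal ?_ ?_).2 (hρ.2 _ _)
        · exact ((hρ.2 (v : X) (w : X)).trans_lt
            (ENNReal.add_lt_top.2 ⟨v.2, w.2⟩)).ne
        · exact (ENNReal.add_lt_top.2 ⟨v.2, w.2⟩).ne
      set f0 : ↥V →ₗ.[ℝ] ℝ := LinearPMap.mkSpanSingleton x' r hx'0 with hf0
      have hf : ∀ v : f0.domain, f0 v ≤ N v := by
        intro v
        obtain ⟨a, ha⟩ := Submodule.mem_span_singleton.1 v.2
        have hv : v = ⟨a • x', by rw [ha]; exact v.2⟩ := by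
          apply Subtype.ext; exact ha.symm
        rw [hv]
        have happ : f0 ⟨a • x', by rw [ha]; exact v.2⟩ = a • r :=
          LinearPMap.mkSpanSingleton'_apply x' r _ a _
        rw [happ]
        have hval : N (a • x') = |a| * r := by
          have : ((a • x' : ↥V) : X) = a • x := rfl
          simp only [hN, this, hρ.1 a]
          rw [ENNReal.toReal_mul, ENNReal.toReal_ofReal (abs_nonneg a)]
        rw [hval, smul_eq_mul]
        exact mul_le_mul_of_nonneg_right (le_abs_self a) hrpos.le
      obtain ⟨g, hg1, hg2⟩ := exists_extension_of_le_sublinear f0 N N_hom N_add hf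
      have hgabs : ∀ v : ↥V, |g v| ≤ N v := by
        intro v
        refine abs_le.2 ⟨?_, hg2 v⟩
        have := hg2 (-v)
        have hneg : N (-v) = N v := by
          have h1 : ((-v : ↥V) : X) = -(v : X) := rfl
          simp only [hN, h1, hρ.map_neg]
        rw [map_neg, hneg] at this
        linarith
      obtain ⟨F, hF⟩ := exists_extend V g
      have hFA : F ∈ A := by
        intro y
        by_cases hy : ρ y < ⊤
        · have hyV : y ∈ V := hy
          have : F y = g ⟨y, hyV⟩ := hF ⟨y, hyV⟩
          rw [this]
          calc ENNReal.ofReal |g ⟨y, hyV⟩| ≤ ENNReal.ofReal (N ⟨y, hyV⟩) :=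
                ENNReal.ofReal_le_ofReal (hgabs ⟨y, hyV⟩)
            _ = ρ y := ENNReal.ofReal_toReal hy.ne
        · rw [not_lt, top_le_iff] at hy
          rw [hy]; exact le_top
      have hFx : F x = r := by
        have h1 : F x = g x' := hF x'
        have hmem : x' ∈ f0.domain := Submodule.mem_span_singleton_self x'
        have h2 : g x' = f0 ⟨x', hmem⟩ := hg1 ⟨x', hmem⟩
        have h3 : f0 ⟨x', hmem⟩ = r := LinearPMap.mkSpanSingleton_apply ℝ ℝ hx'0 r
        rw [h1, h2, h3]
      calc ρ x = ENNReal.ofReal |F x| := by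
            rw [hFx, abs_of_pos hrpos, hr, ENNReal.ofReal_toReal hfin.ne]
        _ ≤ dualSupFun A x := le_iSup₂ (f := fun g (_ : g ∈ A) => ENNReal.ofReal |g x|) F hFA
  · -- ρ x = ⊤
    rw [not_lt, top_le_iff] at hfin
    rw [hfin]
    have hxV : x ∉ finSubmodule hρ := by
      intro h
      have h' : ρ x < ⊤ := h
      rw [hfin] at h'
      exact lt_irrefl _ h' 
    set π := (finSubmodule hρ).mkQ with hπ
    have hv : π x ≠ 0 := by
      rw [hπ, Submodule.mkQ_apply, ne_eq, Submodule.Quotient.mk_eq_zero]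
      exact hxV
    have key : ∀ n : ℕ, (n : ℝ≥0∞) ≤ dualSupFun A x := by
      intro n
      obtain ⟨φ, hφ⟩ := exists_functional hv (n : ℝ)
      set f := φ.comp π with hfdef
      have hfA : f ∈ A := by
        intro y
        by_cases hy : ρ y < ⊤
        · have hyV : y ∈ finSubmodule hρ := hy
          have : f y = 0 := by
            simp only [hfdef, LinearMap.comp_apply, hπ, Submodule.mkQ_apply]
            rw [(Submodule.Quotient.mk_eq_zero _).2 hyV, map_zero]
          rw [this]
          simp
        · rw [not_lt, top_le_iff] at hy
          rw [hy]; exact le_top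
      have hfx : f x = n := by
        simp only [hfdef, LinearMap.comp_apply]
        exact hφ
      calc (n : ℝ≥0∞) = ENNReal.ofReal |f x| := by
            rw [hfx, abs_of_nonneg (Nat.cast_nonneg n), ENNReal.ofReal_natCast]
        _ ≤ dualSupFun A x := le_iSup₂ (f := fun g (_ : g ∈ A) => ENNReal.ofReal |g x|) f hfA
    rw [← ENNReal.iSup_natCast]
    exact iSup_le key

/-- Affine maps with nonzero scalar are continuous for `elcsTopology P`. -/
lemma elcs_affine_continuous (P : Set (X → ℝ≥0∞)) (hP : ∀ ρ ∈ P, IsExtSeminorm ρ)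
    {a : ℝ} (ha : a ≠ 0) (b : X) :
    Continuous[elcsTopology P, elcsTopology P] (fun y => a • y + b) := by
  letI := elcsTopology P
  rw [elcsTopology, continuous_generateFrom_iff]
  rintro s ⟨ρ, hρ, d, ε, hε, rfl⟩
  have ha' : ENNReal.ofReal |a| ≠ 0 := by
    simp only [ne_eq, ENNReal.ofReal_eq_zero, not_le]
    exact abs_pos.2 ha
  have key : (fun y => a • y + b) ⁻¹' {x | ρ (x - d) < ε}
      = {y | ρ (y - a⁻¹ • (d - b)) < ε / ENNReal.ofReal |a|} := by
    ext y
    simp only [Set.mem_preimage, Set.mem_setOf_eq]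
    have h1 : a • y + b - d = a • (y - a⁻¹ • (d - b)) := by
      rw [smul_sub, smul_inv_smul₀ ha]; abel
    rw [h1, (hP ρ hρ).1 a]
    rw [ENNReal.lt_div_iff_mul_lt (Or.inl ha') (Or.inl ENNReal.ofReal_ne_top), mul_comm]
  rw [key]
  exact isOpen_generateFrom_of_mem
    ⟨ρ, hρ, a⁻¹ • (d - b), ε / ENNReal.ofReal |a|,
      ENNReal.div_pos hε.ne' ENNReal.ofReal_ne_top, rfl⟩

end Proof15

/-- `τ` is induced by the extended seminorms `ρ_A` for `A ⊆ X*`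
equicontinuous. -/
theorem stmt15 {X : Type*} [AddCommGroup X] [Module ℝ X]
    (t : TopologicalSpace X) (P : Set (X → ℝ≥0∞)) (hP : IsELCS t P) :
    IsELCS t {ρ | ∃ A : Set (X →ₗ[ℝ] ℝ), EquicontSet t A ∧ ρ = dualSupFun A} := by
  obtain ⟨hPsem, ht⟩ := hP
  subst ht
  constructor
  · rintro ρ ⟨A, hA, rfl⟩
    exact dualSupFun_isExtSeminorm A
  · apply le_antisymm
    · -- every Q-ball is t-open
      refine le_generateFrom ?_
      rintro s ⟨ρ, ⟨A, ⟨U, hU, hUb⟩, rfl⟩, c, ε, hε, rfl⟩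
      letI := elcsTopology P
      rw [isOpen_iff_mem_nhds]
      intro x0 hx0
      simp only [Set.mem_setOf_eq] at hx0
      obtain ⟨δ, hδpos, hδ⟩ := ENNReal.lt_iff_exists_add_pos_lt.1 hx0
      have hδR : (0 : ℝ) < (δ : ℝ) := hδpos
      set n : X → X := fun y => (δ : ℝ)⁻¹ • y + (-((δ : ℝ)⁻¹ • x0)) with hn
      have hncont : Continuous n :=
        elcs_affine_continuous P hPsem (inv_ne_zero hδR.ne') _
      have hnx0 : n x0 = 0 := by simp [hn]
      have hmem : n ⁻¹' U ∈ nhds x0 := by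
        apply hncont.continuousAt.preimage_mem_nhds
        rw [hnx0]
        exact hU
      refine Filter.mem_of_superset hmem ?_
      intro y hy
      simp only [Set.mem_preimage] at hy
      have hrw : y - x0 = (δ : ℝ) • n y := by
        simp only [hn]
        rw [smul_add, smul_smul, mul_inv_cancel₀ hδR.ne', one_smul, smul_neg, smul_smul,
          mul_inv_cancel₀ hδR.ne', one_smul]
        abel
      have hA1 : dualSupFun A (n y) ≤ 1 := by
        refine iSup₂_le fun f hf => ?_
        exact ENNReal.ofReal_le_one.2 (hUb f hf (n y) hy)
      have hsub : dualSupFun A (y - c) ≤ dualSupFun A (x0 - c) + dualSupFun A (y - x0) := by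
        have h1 : y - c = (x0 - c) + (y - x0) := by abel
        rw [h1]
        exact (dualSupFun_isExtSeminorm A).2 _ _
      have h2 : dualSupFun A (y - x0) ≤ (δ : ℝ≥0∞) := by
        rw [hrw, (dualSupFun_isExtSeminorm A).1]
        calc ENNReal.ofReal |(δ : ℝ)| * dualSupFun A (n y)
            ≤ ENNReal.ofReal |(δ : ℝ)| * 1 := mul_le_mul_right hA1 _
          _ = (δ : ℝ≥0∞) := by
              rw [mul_one, abs_of_pos hδR, ENNReal.ofReal_coe_nnreal]
      show dualSupFun A (y - c) < ε
      calc dualSupFun A (y - c) ≤ dualSupFun A (x0 - c) + dualSupFun A (y - x0) := hsub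
        _ ≤ dualSupFun A (x0 - c) + (δ : ℝ≥0∞) := add_le_add_right h2 _
        _ < ε := hδ
    · -- every P-ball is Q-open
      refine le_generateFrom ?_
      rintro s ⟨ρ, hρP, c, ε, hε, rfl⟩
      have hρ := hPsem ρ hρP
      set A := {f : X →ₗ[ℝ] ℝ | ∀ y, ENNReal.ofReal |f y| ≤ ρ y} with hA
      have hρeq : ρ = dualSupFun A := funext (extSeminorm_eq_dualSupFun hρ)
      have hAeq : EquicontSet (elcsTopology P) A := by
        refine ⟨{x | ρ x < 1}, ?_, ?_⟩
        · letI := elcsTopology P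
          have hopen : IsOpen {x | ρ x < 1} :=
            isOpen_generateFrom_of_mem ⟨ρ, hρP, 0, 1, one_pos, by simp⟩
          exact hopen.mem_nhds (by simp [hρ.map_zero])
        · intro f hf x hx
          exact (ENNReal.ofReal_lt_one.1 ((hf x).trans_lt hx)).le
      exact isOpen_generateFrom_of_mem
        ⟨dualSupFun A, ⟨A, hAeq, rfl⟩, c, ε, hε, by rw [hρeq]⟩
end

section
/- (Extended Banach–Alaoglu) Let (X, τ) be an elcs with flc topology τ_F, and let U be an absolutely convex neighborhood of 0 in (X, τ). The following are equivalent: (1) the polar U° = {f ∈ X* : |f(x)| ≤ 1 for all x ∈ U} is compact in the weak* topology on X*; (2) 0 ∈ Core(U); (3) U is a neighborhood of 0 in (X, τ_F). -/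
open scoped ENNReal Pointwise
open TopologicalSpace

section MyAux

variable {X : Type*} [AddCommGroup X] [Module ℝ X]

lemma my_elcs_affine_cont (P : Set (X → ℝ≥0∞)) (hPsem : ∀ ρ ∈ P, IsExtSeminorm ρ)
    {r : ℝ} (hr : r ≠ 0) (c : X) :
    @Continuous X X (elcsTopology P) (elcsTopology P) (fun x => r • x + c) := by
  rw [show (elcsTopology P : TopologicalSpace X) = TopologicalSpace.generateFrom
      {s | ∃ ρ ∈ P, ∃ c : X, ∃ ε : ℝ≥0∞, 0 < ε ∧ s = {x | ρ (x - c) < ε}} from rfl,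
    continuous_generateFrom_iff]
  rintro s ⟨ρ, hρP, c', ε, hε, rfl⟩
  have hρ := hPsem ρ hρP
  have hb0 : ENNReal.ofReal |r| ≠ 0 := ne_of_gt (ENNReal.ofReal_pos.2 (abs_pos.2 hr))
  have hbt : ENNReal.ofReal |r| ≠ ⊤ := ENNReal.ofReal_ne_top
  have key : (fun x => r • x + c) ⁻¹' {x | ρ (x - c') < ε}
      = {x | ρ (x - r⁻¹ • (c' - c)) < ε / ENNReal.ofReal |r|} := by
    ext x
    simp only [Set.mem_preimage, Set.mem_setOf_eq]
    have h1 : r • x + c - c' = r • (x - r⁻¹ • (c' - c)) := by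
      rw [smul_sub, smul_smul, mul_inv_cancel₀ hr, one_smul]
      abel
    rw [h1, hρ.1, ENNReal.lt_div_iff_mul_lt (Or.inl hb0) (Or.inl hbt), mul_comm]
  rw [key]
  exact TopologicalSpace.isOpen_generateFrom_of_mem
    ⟨ρ, hρP, _, _, ENNReal.div_pos (ne_of_gt hε) hbt, rfl⟩

lemma my_affine_nhds (t : TopologicalSpace X) (P : Set (X → ℝ≥0∞)) (hP : IsELCS t P)
    {r : ℝ} (hr : r ≠ 0) (x₀ : X) {U : Set X} (hU : U ∈ @nhds X t 0) :
    {x | r • (x - x₀) ∈ U} ∈ @nhds X t x₀ := by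
  obtain ⟨hsem, rfl⟩ := hP
  letI := elcsTopology P
  have hc : Continuous (fun x : X => r • x + (-(r • x₀))) :=
    my_elcs_affine_cont P hsem hr _
  have hpre : (fun x : X => r • x + (-(r • x₀))) ⁻¹' U ∈ nhds x₀ :=
    (hc.continuousAt (x := x₀)).preimage_mem_nhds (by simpa using hU)
  refine Filter.mem_of_superset hpre fun x hx => ?_
  simpa [smul_sub, sub_eq_add_neg] using hx

lemma my_bounded_continuous (t : TopologicalSpace X) (P : Set (X → ℝ≥0∞)) (hP : IsELCS t P)
    {U : Set X} (hU : U ∈ @nhds X t 0) (f : X →ₗ[ℝ] ℝ)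
    (hf : ∀ x ∈ U, |f x| ≤ 1) : @Continuous X ℝ t _ (fun x => f x) := by
  letI := t
  rw [continuous_iff_continuousAt]
  intro x₀
  rw [ContinuousAt, Metric.tendsto_nhds]
  intro ε hε
  have hr : (2 / ε : ℝ) ≠ 0 := by positivity
  filter_upwards [my_affine_nhds t P hP hr x₀ hU] with x hx
  have h1 : |f ((2 / ε) • (x - x₀))| ≤ 1 := hf _ hx
  rw [map_smul, smul_eq_mul, abs_mul, abs_of_pos (by positivity : (0:ℝ) < 2 / ε)] at h1
  have h2 : |f (x - x₀)| ≤ ε / 2 := by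
    rw [← le_div_iff₀' (by positivity : (0:ℝ) < 2 / ε)] at h1
    calc |f (x - x₀)| ≤ 1 / (2 / ε) := h1
    _ = ε / 2 := one_div_div 2 ε
  rw [Real.dist_eq]
  have h3 : f (x - x₀) = f x - f x₀ := map_sub f x x₀
  rw [h3] at h2
  linarith

def myAbsorbSubmodule (U : Set X) (hbal : Balanced ℝ U) (hconv : Convex ℝ U)
    (h0 : (0 : X) ∈ U) : Submodule ℝ X where
  carrier := {x | ∃ r : ℝ, 0 < r ∧ x ∈ r • U}
  zero_mem' := ⟨1, one_pos, ⟨0, h0, smul_zero 1⟩⟩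
  add_mem' := by
    rintro x y ⟨r, hr, u, hu, rfl⟩ ⟨s, hs, v, hv, rfl⟩
    refine ⟨r + s, by positivity, (r / (r + s)) • u + (s / (r + s)) • v,
      hconv hu hv (by positivity) (by positivity) (by field_simp), ?_⟩
    have hrs : r + s ≠ 0 := by positivity
    have e1 : ((r + s) * (r / (r + s))) = r := by field_simp
    have e2 : ((r + s) * (s / (r + s))) = s := by field_simp
    simp only [smul_add, smul_smul, e1, e2]
  smul_mem' := by
    rintro a x ⟨r, hr, u, hu, rfl⟩
    rcases eq_or_ne a 0 with rfl | ha
    · exact ⟨1, one_pos, 0, h0, by simp⟩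
    · have haa : |a| ≠ 0 := ne_of_gt (abs_pos.2 ha)
      refine ⟨|a| * r, by positivity, (a / |a|) • u, ?_, ?_⟩
      · exact hbal (a / |a|) (le_of_eq (by rw [Real.norm_eq_abs, abs_div, abs_abs,
          div_self haa])) (Set.smul_mem_smul_set hu)
      · have e : (|a| * r) * (a / |a|) = a * r := by field_simp
        simp only [smul_smul, e]

lemma my_exists_functional (Y : Submodule ℝ X) (x₀ : X) (hx₀ : x₀ ∉ Y) :
    ∃ f : X →ₗ[ℝ] ℝ, (∀ y ∈ Y, f y = 0) ∧ f x₀ = 1 := by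
  have hq : (Submodule.Quotient.mk x₀ : X ⧸ Y) ≠ 0 := by
    simpa [Submodule.Quotient.mk_eq_zero] using hx₀
  have hne : ¬ ∀ φ : Module.Dual ℝ (X ⧸ Y), φ (Submodule.Quotient.mk x₀) = 0 := by
    rw [Module.forall_dual_apply_eq_zero_iff ℝ]
    exact hq
  push_neg at hne
  obtain ⟨φ, hφ⟩ := hne
  refine ⟨(φ ((Submodule.Quotient.mk x₀ : X ⧸ Y)))⁻¹ • (φ ∘ₗ Y.mkQ), fun y hy => ?_, ?_⟩
  · simp [Submodule.mkQ_apply, (Submodule.Quotient.mk_eq_zero Y).2 hy]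
  · simp [Submodule.mkQ_apply, inv_mul_cancel₀ hφ]

lemma my_eval_continuous (t : TopologicalSpace X) (x : X) :
    @Continuous _ _ (weakStarTopology t) _ (fun f : ↥(dualSubmodule t) => f.1 x) :=
  continuous_iInf_dom (i := x) continuous_induced_dom

lemma my_weakStar_eq_induced (t : TopologicalSpace X) :
    weakStarTopology t = TopologicalSpace.induced
      (fun f : ↥(dualSubmodule t) => (fun x => f.1 x)) Pi.topologicalSpace := by
  rw [Pi.topologicalSpace, induced_iInf]
  simp only [induced_compose]
  rfl

lemma my_core_absorbent {U : Set X} (hbal : Balanced ℝ U) (h0U : (0 : X) ∈ U)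
    (hcore : ZeroInCore U) : Absorbent ℝ U := by
  rw [absorbent_iff_eventually_nhdsNE_zero]
  intro x
  obtain ⟨δ, hδ, hmem⟩ := hcore x
  have : ∀ᶠ c : ℝ in nhds 0, c • x ∈ U := by
    rw [Metric.eventually_nhds_iff]
    refine ⟨δ, hδ, fun {c} hc => ?_⟩
    rcases eq_or_ne c 0 with rfl | hc0
    · simpa using h0U
    · have h1 : |c| • x ∈ U := hmem |c| (abs_nonneg c)
        (by rw [Real.dist_eq, sub_zero] at hc; exact hc.le)
      have h2 : c • x = (c / |c|) • (|c| • x) := by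
        rw [smul_smul, div_mul_cancel₀ _ (by simpa [abs_pos] using hc0 : |c| ≠ 0)]
      rw [h2]
      exact hbal (c / |c|) (by simp [Real.norm_eq_abs, abs_div, abs_abs,
        div_self (by simpa [abs_pos] using hc0 : |c| ≠ 0)]) (Set.smul_mem_smul_set h1)
  exact this.filter_mono nhdsWithin_le_nhds

end MyAux

/-- extended Banach–Alaoglu: for an absolutely convex neighborhood `U`
of `0`, `U°` is weak* compact ↔ `0 ∈ Core U` ↔ `U` is a `τ_F`-neighborhood of `0`. -/
theorem stmt16 {X : Type*} [AddCommGroup X] [Module ℝ X]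
    (t tF : TopologicalSpace X) (P : Set (X → ℝ≥0∞)) (hP : IsELCS t P)
    (hF : IsFlcTopology t tF)
    (U : Set X) (hU : U ∈ @nhds X t 0) (hbal : Balanced ℝ U) (hconv : Convex ℝ U) :
    (@IsCompact ↥(dualSubmodule t) (weakStarTopology t)
        {f : ↥(dualSubmodule t) | ∀ x ∈ U, |f.1 x| ≤ 1} ↔ ZeroInCore U) ∧
    (ZeroInCore U ↔ U ∈ @nhds X tF 0) := by
  classical
  have h0U : (0 : X) ∈ U := by letI := t; exact mem_of_mem_nhds hU
  constructor
  · constructor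
    · -- compact → core
      intro hcomp
      by_contra hcore
      unfold ZeroInCore at hcore
      push_neg at hcore
      obtain ⟨x₀, hx₀⟩ := hcore
      have hno : ∀ s : ℝ, 0 < s → s • x₀ ∉ U := by
        intro s hs hmemU
        obtain ⟨s', h0s', hs', hnot⟩ := hx₀ s hs
        apply hnot
        have h1 : s' • x₀ = (s' / s) • (s • x₀) + (1 - s' / s) • (0 : X) := by
          rw [smul_smul, div_mul_cancel₀ _ (ne_of_gt hs), smul_zero, add_zero]
        rw [h1]
        exact hconv hmemU h0U (by positivity) (by
          have := (div_le_one hs).2 hs'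
          linarith) (by ring)
      set Y := myAbsorbSubmodule U hbal hconv h0U with hY
      have hx₀Y : x₀ ∉ Y := by
        rintro ⟨r, hr, u, hu, hru⟩
        refine hno r⁻¹ (by positivity) ?_
        have : r⁻¹ • x₀ = u := by rw [← hru, smul_smul, inv_mul_cancel₀ (ne_of_gt hr), one_smul]
        rw [this]; exact hu
      obtain ⟨f, hfY, hfx₀⟩ := my_exists_functional Y x₀ hx₀Y
      have hUY : ∀ x ∈ U, x ∈ Y := fun x hx => ⟨1, one_pos, x, hx, one_smul ℝ x⟩
      have hf1 : ∀ x ∈ U, |f x| ≤ 1 := fun x hx => by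
        rw [hfY x (hUY x hx)]; norm_num
      have hcont := my_bounded_continuous t P hP hU f hf1
      letI tw := weakStarTopology t
      have hfD : f ∈ dualSubmodule t := hcont
      set fD : ↥(dualSubmodule t) := ⟨f, hfD⟩ with hfDdef
      have hev : @Continuous _ _ tw _ (fun g : ↥(dualSubmodule t) => g.1 x₀) :=
        my_eval_continuous t x₀
      have himg := hcomp.image hev
      obtain ⟨M, hM⟩ := himg.bddAbove
      obtain ⟨n, hn⟩ := exists_nat_gt M
      have hmemS : (n : ℝ) • fD ∈ {f : ↥(dualSubmodule t) | ∀ x ∈ U, |f.1 x| ≤ 1} := by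
        intro x hx
        have hv : ((n : ℝ) • fD).1 x = (n : ℝ) * f x := rfl
        rw [hv, hfY x (hUY x hx), mul_zero]
        norm_num
      have hle : ((n : ℝ) • fD).1 x₀ ≤ M := hM ⟨_, hmemS, rfl⟩
      have hval : ((n : ℝ) • fD).1 x₀ = (n : ℝ) := by
        have : ((n : ℝ) • fD).1 x₀ = (n : ℝ) * f x₀ := rfl
        rw [this, hfx₀, mul_one]
      rw [hval] at hle
      exact absurd (lt_of_lt_of_le hn hle) (lt_irrefl _)
    · -- core → compact
      intro hcore
      choose δ hδpos hδ using hcore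
      letI tw := weakStarTopology t
      set Φ : ↥(dualSubmodule t) → (X → ℝ) := fun f => (fun x => f.1 x) with hΦ
      have hind : tw = TopologicalSpace.induced Φ Pi.topologicalSpace :=
        my_weakStar_eq_induced t
      have hinj : Function.Injective Φ := by
        intro f g h
        apply Subtype.ext
        apply LinearMap.ext
        intro x
        exact congrFun h x
      have hemb : Topology.IsEmbedding Φ := ⟨⟨hind⟩, hinj⟩
      set L : Set (X → ℝ) := {φ | (∀ x y, φ (x + y) = φ x + φ y) ∧
        (∀ (a : ℝ) (x : X), φ (a • x) = a * φ x) ∧ ∀ x ∈ U, |φ x| ≤ 1} with hL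
      have himg : Φ '' {f : ↥(dualSubmodule t) | ∀ x ∈ U, |f.1 x| ≤ 1} = L := by
        apply Set.Subset.antisymm
        · rintro _ ⟨f, hf, rfl⟩
          exact ⟨fun x y => map_add f.1 x y, fun a x => map_smul f.1 a x, hf⟩
        · rintro φ ⟨h1, h2, h3⟩
          set f : X →ₗ[ℝ] ℝ :=
            { toFun := φ, map_add' := h1, map_smul' := fun a x => by simpa using h2 a x }
            with hfdef
          have hcont : @Continuous X ℝ t _ (fun x => f x) :=
            my_bounded_continuous t P hP hU f h3
          exact ⟨⟨f, hcont⟩, h3, rfl⟩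
      have hK : IsCompact (Set.pi Set.univ fun x : X => Set.Icc (-(δ x)⁻¹) ((δ x)⁻¹)) :=
        isCompact_univ_pi fun x => isCompact_Icc
      have hLK : L ⊆ Set.pi Set.univ fun x : X => Set.Icc (-(δ x)⁻¹) ((δ x)⁻¹) := by
        rintro φ ⟨h1, h2, h3⟩
        rw [Set.mem_univ_pi]
        intro x
        have hx : δ x • x ∈ U := hδ x (δ x) (hδpos x).le le_rfl
        have hb := h3 _ hx
        rw [h2, abs_mul, abs_of_pos (hδpos x)] at hb
        rw [Set.mem_Icc, ← abs_le]
        rw [← le_div_iff₀' (hδpos x)] at hb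
        simpa [one_div] using hb
      have hLclosed : IsClosed L := by
        have e1 : IsClosed {φ : X → ℝ | ∀ x y, φ (x + y) = φ x + φ y} := by
          simp only [Set.setOf_forall]
          exact isClosed_iInter fun x => isClosed_iInter fun y =>
            isClosed_eq (continuous_apply (x + y)) ((continuous_apply x).add (continuous_apply y))
        have e2 : IsClosed {φ : X → ℝ | ∀ (a : ℝ) (x : X), φ (a • x) = a * φ x} := by
          simp only [Set.setOf_forall]
          exact isClosed_iInter fun a => isClosed_iInter fun x =>
            isClosed_eq (continuous_apply (a • x)) (continuous_const.mul (continuous_apply x))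
        have e3 : IsClosed {φ : X → ℝ | ∀ x ∈ U, |φ x| ≤ 1} := by
          simp only [Set.setOf_forall]
          exact isClosed_iInter fun x => isClosed_iInter fun _ =>
            isClosed_le (continuous_apply x).abs continuous_const
        have : L = {φ : X → ℝ | ∀ x y, φ (x + y) = φ x + φ y} ∩
            ({φ : X → ℝ | ∀ (a : ℝ) (x : X), φ (a • x) = a * φ x} ∩
              {φ : X → ℝ | ∀ x ∈ U, |φ x| ≤ 1}) := by
          ext φ
          simp only [hL, Set.mem_setOf_eq, Set.mem_inter_iff]
        rw [this]
        exact e1.inter (e2.inter e3)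
      have hLcomp : IsCompact L := hK.of_isClosed_subset hLclosed hLK
      rw [hemb.isCompact_iff, himg]
      exact hLcomp
  · constructor
    · -- core → tF nhds
      intro hcore
      have habs : Absorbent ℝ U := my_core_absorbent hbal h0U hcore
      set p : Seminorm ℝ X := gaugeSeminorm hbal hconv habs with hp
      letI t' : TopologicalSpace X :=
        (SeminormFamily.moduleFilterBasis (fun _ : Fin 1 => p)).topology
      have hW : WithSeminorms (𝕜 := ℝ) (E := X) (fun _ : Fin 1 => p) := ⟨rfl⟩
      have hle : t ≤ t' := by
        rw [le_iff_nhds]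
        intro x₀ s hs
        rw [hW.hasBasis_ball.mem_iff] at hs
        obtain ⟨⟨F, r⟩, hr, hsub⟩ := hs
        simp only at hr hsub
        have hsup : F.sup (fun _ : Fin 1 => p) ≤ p := Finset.sup_le fun i _ => le_rfl
        have hmem : {x | (2 / r) • (x - x₀) ∈ U} ∈ @nhds X t x₀ :=
          my_affine_nhds t P hP (by positivity) x₀ hU
        refine Filter.mem_of_superset (Filter.mem_of_superset hmem ?_) hsub
        intro x hx
        rw [Set.mem_setOf_eq] at hx
        rw [Seminorm.mem_ball]
        refine lt_of_le_of_lt (hsup (x - x₀)) ?_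
        have h1 : gauge U ((2 / r) • (x - x₀)) ≤ 1 := gauge_le_one_of_mem hx
        have h2 : p ((2 / r) • (x - x₀)) ≤ 1 := by
          simpa only [hp, gaugeSeminorm_toFun] using h1
        rw [map_smul_eq_mul, Real.norm_eq_abs, abs_of_pos (by positivity : (0:ℝ) < 2 / r),
          ← le_div_iff₀' (by positivity : (0:ℝ) < 2 / r)] at h2
        calc p (x - x₀) ≤ 1 / (2 / r) := h2
        _ = r / 2 := one_div_div 2 r
        _ < r := by linarith
      have hU' : U ∈ @nhds X t' 0 := by
        rw [hW.hasBasis.mem_iff]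
        refine ⟨(({0} : Finset (Fin 1)).sup (fun _ : Fin 1 => p)).ball 0 1,
          SeminormFamily.basisSets_mem _ _ zero_lt_one, ?_⟩
        intro x hx
        simp only [id_eq] at hx
        rw [Seminorm.mem_ball_zero] at hx
        have hle' : p ≤ ({0} : Finset (Fin 1)).sup (fun _ : Fin 1 => p) :=
          Finset.le_sup (f := fun _ : Fin 1 => p) (Finset.mem_singleton_self 0)
        have hpx : p x < 1 := lt_of_le_of_lt (hle' x) hx
        have hgx : gauge U x < 1 := by simpa only [hp, gaugeSeminorm_toFun] using hpx
        exact gauge_lt_one_subset_self hconv h0U habs hgx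
      have hfin : tF ≤ t' := hF.2.2.2.2 t' hle hW.topologicalAddGroup hW.continuousSMul
        hW.toLocallyConvexSpace
      exact Filter.le_def.1 ((le_iff_nhds tF t').1 hfin 0) U hU'
    · -- tF nhds → core
      intro hmem x
      letI := tF
      haveI := hF.2.2.1
      haveI := hF.2.1
      have hc : Continuous (fun s : ℝ => s • x) := continuous_id.smul continuous_const
      have hpre : (fun s : ℝ => s • x) ⁻¹' U ∈ nhds (0 : ℝ) :=
        (hc.continuousAt (x := 0)).preimage_mem_nhds (by simpa using hmem)
      obtain ⟨ε, hε, hball⟩ := Metric.mem_nhds_iff.1 hpre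
      refine ⟨ε / 2, by positivity, fun s hs0 hs => ?_⟩
      have : s ∈ Metric.ball (0 : ℝ) ε := by
        rw [Metric.mem_ball, Real.dist_eq, sub_zero, abs_of_nonneg hs0]
        linarith
      exact hball this
end

section
/- Let (X, ‖·‖) be an extended normed linear space. The closed unit ball B_{X*} = {f ∈ X* : ‖f‖_op ≤ 1} of the dual is weak* compact if and only if X = X_fin, i.e., ‖·‖ is an ordinary norm. -/
open scoped ENNReal Pointwise
open TopologicalSpace

section AuxStmt17

variable {X : Type*} [AddCommGroup X] [Module ℝ X] {ρ : X → ℝ≥0∞}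

lemma aux_ball_isOpen (c : X) {ε : ℝ≥0∞} (hε : 0 < ε) :
    @IsOpen X (elcsTopology {ρ}) {x | ρ (x - c) < ε} :=
  TopologicalSpace.GenerateOpen.basic _ ⟨ρ, rfl, c, ε, hε, rfl⟩

lemma aux_bound_of_unitBall (hρ : IsExtSeminorm ρ) {g : X → ℝ}
    (hhom : ∀ (a : ℝ) (x : X), g (a • x) = a * g x)
    (hb : ∀ x, ρ x ≤ 1 → |g x| ≤ 1) :
    ∀ (y : X) (ε : ℝ), 0 < ε → ρ y ≤ ENNReal.ofReal ε → |g y| ≤ ε := by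
  intro y ε hε hy
  have hεinv : (0:ℝ) < ε⁻¹ := inv_pos.2 hε
  have hz : ρ (ε⁻¹ • y) ≤ 1 := by
    rw [hρ.1]
    refine (mul_le_mul_right hy _).trans ?_
    rw [abs_of_pos hεinv, ← ENNReal.ofReal_mul hεinv.le, inv_mul_cancel₀ hε.ne',
      ENNReal.ofReal_one]
  have h1 := hb _ hz
  rw [hhom, abs_mul, abs_of_pos hεinv] at h1
  have := mul_le_mul_of_nonneg_left h1 hε.le
  rwa [← mul_assoc, mul_inv_cancel₀ hε.ne', one_mul, mul_one] at this

lemma aux_continuous_of_unitBall (hρ : IsExtSeminorm ρ) (f : X →ₗ[ℝ] ℝ)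
    (hb : ∀ x, ρ x ≤ 1 → |f x| ≤ 1) :
    @Continuous X ℝ (elcsTopology {ρ}) _ fun x => f x := by
  letI : TopologicalSpace X := elcsTopology {ρ}
  rw [continuous_def]
  intro U hU
  rw [isOpen_iff_forall_mem_open]
  intro x₀ hx₀
  obtain ⟨ε, hε, hball⟩ := Metric.isOpen_iff.1 hU _ hx₀
  refine ⟨{x | ρ (x - x₀) < ENNReal.ofReal (ε / 2)}, ?_, aux_ball_isOpen x₀
    (ENNReal.ofReal_pos.2 (by linarith)), ?_⟩
  · intro x hx
    have hxb : |f (x - x₀)| ≤ ε / 2 :=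
      aux_bound_of_unitBall hρ (fun a y => by rw [map_smul]; rfl) hb _ _ (by linarith)
        (le_of_lt hx)
    apply hball
    rw [Metric.mem_ball, Real.dist_eq]
    have : f x - f x₀ = f (x - x₀) := by rw [map_sub]
    rw [this]
    linarith [hxb]
  · simp only [Set.mem_setOf_eq, sub_self, hρ.map_zero]
    exact ENNReal.ofReal_pos.2 (by linarith)

end AuxStmt17

/-- the closed unit ball of the dual of an enls is weak* compact iff
`X = X_fin`, i.e. the extended norm is a norm. -/
theorem stmt17 {X : Type*} [AddCommGroup X] [Module ℝ X]
    (ρ : X → ℝ≥0∞) (hρ : IsExtNorm ρ)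
    (t : TopologicalSpace X) (ht : t = elcsTopology {ρ}) :
    @IsCompact ↥(dualSubmodule t) (weakStarTopology t)
        {f : ↥(dualSubmodule t) | ∀ x : X, ρ x ≤ 1 → |f.1 x| ≤ 1} ↔
      finSubmodule hρ.1 = (⊤ : Submodule ℝ X) := by
  subst ht
  set t := elcsTopology {ρ} with ht
  constructor
  · -- compact → everywhere finite
    intro hK
    rw [Submodule.eq_top_iff']
    by_contra hcon
    push_neg at hcon
    obtain ⟨x₀, hx₀⟩ := hcon
    have hx₀' : ¬ ρ x₀ < ⊤ := hx₀
    -- build a functional vanishing on the finite part with f x₀ = 1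
    set p : Submodule ℝ X := finSubmodule hρ.1 with hp
    have hq : Submodule.Quotient.mk (p := p) x₀ ≠ 0 := fun h =>
      hx₀ ((Submodule.Quotient.mk_eq_zero p).1 h)
    obtain ⟨φ, hφ⟩ : ∃ φ : Module.Dual ℝ (X ⧸ p), φ (Submodule.Quotient.mk x₀) ≠ 0 := by
      by_contra hc
      push_neg at hc
      exact hq ((Module.forall_dual_apply_eq_zero_iff ℝ _).1 hc)
    set c : ℝ := φ (Submodule.Quotient.mk x₀) with hc
    set f : X →ₗ[ℝ] ℝ := (c⁻¹ • φ).comp p.mkQ with hf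
    have hfx₀ : f x₀ = 1 := by
      simp only [hf, LinearMap.comp_apply, LinearMap.smul_apply, smul_eq_mul,
        Submodule.mkQ_apply]
      exact inv_mul_cancel₀ hφ
    have hfzero : ∀ x : X, ρ x < ⊤ → f x = 0 := by
      intro x hx
      have : p.mkQ x = 0 := by
        rw [Submodule.mkQ_apply, Submodule.Quotient.mk_eq_zero]
        exact hx
      simp [hf, this]
    have hbn : ∀ n : ℕ, ∀ x : X, ρ x ≤ 1 → |((n : ℝ) • f) x| ≤ 1 := by
      intro n x hx
      rw [LinearMap.smul_apply, hfzero x (lt_of_le_of_lt hx (by simp))]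
      simp
    have hcont : ∀ n : ℕ, @Continuous X ℝ t _ fun x => ((n : ℝ) • f) x :=
      fun n => aux_continuous_of_unitBall hρ.1 _ (hbn n)
    -- evaluation at x₀ is continuous for the weak* topology
    have heval : @Continuous _ _ (weakStarTopology t) _
        (fun g : ↥(dualSubmodule t) => g.1 x₀) := by
      apply continuous_iInf_dom (i := x₀)
      exact continuous_induced_dom
    have himg := @IsCompact.image _ _ (weakStarTopology t) _ _ _ hK heval
    obtain ⟨M, hM⟩ := himg.isBounded.subset_ball 0
    obtain ⟨n, hn⟩ := exists_nat_gt (|M| + 1)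
    have hmem : ((n : ℝ) • f) ∈ dualSubmodule t := hcont n
    have : (⟨(n : ℝ) • f, hmem⟩ : ↥(dualSubmodule t)) ∈
        {g : ↥(dualSubmodule t) | ∀ x : X, ρ x ≤ 1 → |g.1 x| ≤ 1} := hbn n
    have h2 : ((n : ℝ) • f) x₀ ∈ Metric.ball (0 : ℝ) M :=
      hM ⟨_, this, rfl⟩
    rw [Metric.mem_ball, Real.dist_eq, sub_zero, LinearMap.smul_apply, hfx₀,
      smul_eq_mul, mul_one] at h2
    have h3 : (n : ℝ) ≤ |(n : ℝ)| := le_abs_self _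
    have h4 : M ≤ |M| := le_abs_self _
    linarith
  · -- everywhere finite → compact
    intro hfin
    have hfin' : ∀ x : X, ρ x < ⊤ := by
      rw [Submodule.eq_top_iff'] at hfin
      exact hfin
    letI tw : TopologicalSpace ↥(dualSubmodule t) := weakStarTopology t
    set e : ↥(dualSubmodule t) → (X → ℝ) := fun g x => g.1 x with he
    have hind : tw = TopologicalSpace.induced e Pi.topologicalSpace := by
      rw [Pi.topologicalSpace, induced_iInf]
      simp only [induced_compose]
      rfl
    have hinducing : @Topology.IsInducing _ _ tw _ e := by
      exact ⟨hind⟩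
    rw [hinducing.isCompact_iff]
    -- the image is the set S of bounded "linear" functions
    set S : Set (X → ℝ) := {g | (∀ x y, g (x + y) = g x + g y) ∧
      (∀ (a : ℝ) (x : X), g (a • x) = a * g x) ∧ ∀ x, ρ x ≤ 1 → |g x| ≤ 1} with hS
    have himg : e '' {g : ↥(dualSubmodule t) | ∀ x : X, ρ x ≤ 1 → |g.1 x| ≤ 1} = S := by
      apply Set.Subset.antisymm
      · rintro _ ⟨g, hg, rfl⟩
        refine ⟨fun x y => map_add g.1 x y, fun a x => ?_, hg⟩
        show g.1 (a • x) = a * g.1 x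
        rw [map_smul]
        rfl
      · rintro g ⟨hadd, hsmul, hb⟩
        set F : X →ₗ[ℝ] ℝ :=
          { toFun := g
            map_add' := hadd
            map_smul' := fun a x => hsmul a x } with hF
        have hFc : F ∈ dualSubmodule t := aux_continuous_of_unitBall hρ.1 F hb
        exact ⟨⟨F, hFc⟩, hb, rfl⟩
    rw [himg]
    -- S is a closed subset of a product of compact intervals
    have hclosed : IsClosed S := by
      have h1 : IsClosed {g : X → ℝ | ∀ x y, g (x + y) = g x + g y} := by
        have he1 : {g : X → ℝ | ∀ x y, g (x + y) = g x + g y} =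
            ⋂ (x) (y), {g : X → ℝ | g (x + y) = g x + g y} := by
          ext g; simp [Set.mem_iInter]
        rw [he1]
        exact isClosed_iInter fun x => isClosed_iInter fun y =>
          isClosed_eq (continuous_apply _) ((continuous_apply x).add (continuous_apply y))
      have h2 : IsClosed {g : X → ℝ | ∀ (a : ℝ) (x : X), g (a • x) = a * g x} := by
        have he2 : {g : X → ℝ | ∀ (a : ℝ) (x : X), g (a • x) = a * g x} =
            ⋂ (a : ℝ) (x : X), {g : X → ℝ | g (a • x) = a * g x} := by
          ext g; simp [Set.mem_iInter]
        rw [he2]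
        exact isClosed_iInter fun a => isClosed_iInter fun x =>
          isClosed_eq (continuous_apply _) (continuous_const.mul (continuous_apply x))
      have h3 : IsClosed {g : X → ℝ | ∀ x, ρ x ≤ 1 → |g x| ≤ 1} := by
        have he3 : {g : X → ℝ | ∀ x, ρ x ≤ 1 → |g x| ≤ 1} =
            ⋂ (x : X) (_ : ρ x ≤ 1), {g : X → ℝ | |g x| ≤ 1} := by
          ext g; simp [Set.mem_iInter]
        rw [he3]
        exact isClosed_iInter fun x => isClosed_iInter fun _ =>
          isClosed_le (continuous_abs.comp (continuous_apply x)) continuous_const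
      have : S = {g : X → ℝ | ∀ x y, g (x + y) = g x + g y} ∩
          ({g : X → ℝ | ∀ (a : ℝ) (x : X), g (a • x) = a * g x} ∩
            {g : X → ℝ | ∀ x, ρ x ≤ 1 → |g x| ≤ 1}) := by
        ext g; simp [hS, Set.mem_setOf_eq, and_assoc]
      rw [this]
      exact h1.inter (h2.inter h3)
    set r : X → ℝ := fun x => (ρ x).toReal + 1 with hr
    have hsub : S ⊆ Set.univ.pi fun x => Set.Icc (-(r x)) (r x) := by
      intro g hg x _
      have hrpos : 0 < r x := by positivity
      have hle : ρ x ≤ ENNReal.ofReal (r x) := by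
        have : ρ x = ENNReal.ofReal (ρ x).toReal := (ENNReal.ofReal_toReal (hfin' x).ne).symm
        rw [this]
        exact ENNReal.ofReal_le_ofReal (by simp [hr])
      have := aux_bound_of_unitBall hρ.1 hg.2.1 hg.2.2 x (r x) hrpos hle
      rw [Set.mem_Icc]
      constructor <;> [linarith [neg_abs_le (g x)]; linarith [le_abs_self (g x)]]
    exact (isCompact_univ_pi fun x => isCompact_Icc).of_isClosed_subset hclosed hsub
end

section
/- Let (X, τ) be a fundamental elcs (i.e., X_fin = X_fin^ρ for some continuous extended seminorm ρ, equivalently X_fin is open) with X = X_fin ⊕ M. Then on X*, the topology τ_ucb of uniform convergence on τ-bounded subsets of X equals the strong topology τ_s of uniform convergence on τ_F-bounded subsets of X, where τ_F is the flc topology of (X, τ). In particular, this holds for every extended normed linear space. -/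
open scoped ENNReal Pointwise
open TopologicalSpace

set_option linter.unusedSectionVars false
set_option maxHeartbeats 1000000

section Aux1

open Topology Filter Set

variable {X : Type*} [AddCommGroup X] [Module ℝ X]

namespace ElcsAux

theorem extsem_neg {ρ : X → ℝ≥0∞} (h : IsExtSeminorm ρ) (x : X) : ρ (-x) = ρ x := by
  have := h.1 (-1) x
  simpa using this

theorem extsem_sub_symm {ρ : X → ℝ≥0∞} (h : IsExtSeminorm ρ) (x y : X) :
    ρ (x - y) = ρ (y - x) := by
  rw [← extsem_neg h (y - x), neg_sub]

theorem extsem_tri {ρ : X → ℝ≥0∞} (h : IsExtSeminorm ρ) (x y : X) :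
    ρ x ≤ ρ y + ρ (x - y) := by
  have := h.2 y (x - y)
  simpa using this

theorem isOpen_ball {P : Set (X → ℝ≥0∞)} {ρ : X → ℝ≥0∞} (hρ : ρ ∈ P)
    (c : X) {ε : ℝ≥0∞} (hε : 0 < ε) : IsOpen[elcsTopology P] {x | ρ (x - c) < ε} :=
  TopologicalSpace.GenerateOpen.basic _ ⟨ρ, hρ, c, ε, hε, rfl⟩

theorem continuous_add_const {P : Set (X → ℝ≥0∞)} (a : X) :
    Continuous[elcsTopology P, elcsTopology P] (fun x => x + a) := by
  rw [elcsTopology, continuous_generateFrom_iff]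
  rintro s ⟨ρ, hρ, c, ε, hε, rfl⟩
  have : (fun x : X => x + a) ⁻¹' {x | ρ (x - c) < ε} = {x | ρ (x - (c - a)) < ε} := by
    ext x; simp only [Set.mem_preimage, Set.mem_setOf_eq]
    rw [show x + a - c = x - (c - a) by abel]
  rw [this]
  exact isOpen_ball hρ (c - a) hε

theorem isOpen_translate {P : Set (X → ℝ≥0∞)} {U : Set X}
    (hU : IsOpen[elcsTopology P] U) (a : X) :
    IsOpen[elcsTopology P] {x | x - a ∈ U} := by
  letI := elcsTopology P
  have h2 := Continuous.isOpen_preimage (continuous_add_const (P := P) (-a)) U hU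
  have heq : (fun x : X => x + (-a)) ⁻¹' U = {x | x - a ∈ U} := by
    ext x; simp [sub_eq_add_neg]
  rwa [heq] at h2

theorem continuous_smul_const {P : Set (X → ℝ≥0∞)} (hP : ∀ ρ ∈ P, IsExtSeminorm ρ)
    {s : ℝ} (hs : s ≠ 0) :
    Continuous[elcsTopology P, elcsTopology P] (fun x => s • x) := by
  rw [elcsTopology, continuous_generateFrom_iff]
  rintro u ⟨ρ, hρ, c, ε, hε, rfl⟩
  have habs : (0:ℝ) < |s| := abs_pos.mpr hs
  have hne : ENNReal.ofReal |s| ≠ 0 := ne_of_gt (ENNReal.ofReal_pos.mpr habs)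
  have hnetop : ENNReal.ofReal |s| ≠ ⊤ := ENNReal.ofReal_ne_top
  set ε' : ℝ≥0∞ := (ENNReal.ofReal |s|)⁻¹ * ε with hε'
  have hε'pos : 0 < ε' := by
    apply ENNReal.mul_pos _ hε.ne'
    simp [ENNReal.inv_ne_zero, hnetop]
  have hcancel : ENNReal.ofReal |s| * ε' = ε := by
    rw [hε', ← mul_assoc, ENNReal.mul_inv_cancel hne hnetop, one_mul]
  have key : (fun x : X => s • x) ⁻¹' {x | ρ (x - c) < ε} = {x | ρ (x - s⁻¹ • c) < ε'} := by
    ext x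
    simp only [Set.mem_preimage, Set.mem_setOf_eq]
    have h1 : s • x - c = s • (x - s⁻¹ • c) := by
      rw [smul_sub, smul_inv_smul₀ hs]
    rw [h1, (hP ρ hρ).1, ← hcancel, ENNReal.mul_lt_mul_iff_right hne hnetop]
  rw [key]
  exact isOpen_ball hρ _ hε'pos

/-- Continuity of each member of the defining family. -/
theorem continuous_mem {P : Set (X → ℝ≥0∞)} (hP : ∀ ρ ∈ P, IsExtSeminorm ρ)
    {ρ : X → ℝ≥0∞} (hρ : ρ ∈ P) : Continuous[elcsTopology P, _] ρ := by
  letI := elcsTopology P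
  rw [continuous_iff_continuousAt]
  intro x
  have hsem := hP ρ hρ
  by_cases hx : ρ x = ⊤
  · have hball : {y | ρ (y - x) < 1} ∈ 𝓝 x := by
      refine (isOpen_ball hρ x one_pos).mem_nhds ?_
      simp [hsem.map_zero]
    have hev : ∀ᶠ y in 𝓝 x, ρ y = ⊤ := by
      filter_upwards [hball] with y hy
      by_contra hne
      have h1 : ρ x ≤ ρ y + ρ (x - y) := extsem_tri hsem x y
      rw [extsem_sub_symm hsem x y] at h1
      have hfin : ρ y + ρ (y - x) < ⊤ :=
        ENNReal.add_lt_top.2 ⟨lt_top_iff_ne_top.2 hne, hy.trans ENNReal.one_lt_top⟩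
      rw [hx] at h1
      exact (not_le.mpr hfin) h1
    rw [ContinuousAt, hx]
    exact Filter.Tendsto.congr' (by filter_upwards [hev] with y hy; exact hy.symm) tendsto_const_nhds
  · rw [ContinuousAt, ENNReal.tendsto_nhds hx]
    intro ε hε
    have hεpos : 0 < min ε 1 := lt_min hε one_pos
    have hball : {y | ρ (y - x) < min ε 1} ∈ 𝓝 x := by
      refine (isOpen_ball hρ x hεpos).mem_nhds ?_
      simpa [hsem.map_zero] using hεpos
    filter_upwards [hball] with y hy
    constructor
    · have h1 : ρ x ≤ ρ y + ρ (x - y) := extsem_tri hsem x y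
      rw [extsem_sub_symm hsem x y] at h1
      rw [tsub_le_iff_right]
      exact h1.trans (add_le_add_right (hy.le.trans (min_le_left _ _)) _)
    · have h2 : ρ y ≤ ρ x + ρ (y - x) := extsem_tri hsem y x
      exact h2.trans (add_le_add_right (hy.le.trans (min_le_left _ _)) _)

end ElcsAux
end Aux1
section Aux2

open Topology Filter Set

variable {X : Type*} [AddCommGroup X] [Module ℝ X]

namespace ElcsAux

theorem exists_finite_balls {P : Set (X → ℝ≥0∞)} (hP : ∀ ρ ∈ P, IsExtSeminorm ρ) {V : Set X}
    (hV : IsOpen[elcsTopology P] V) :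
    ∀ x ∈ V, ∃ s : Finset ((X → ℝ≥0∞) × ℝ≥0∞),
      (∀ p ∈ s, p.1 ∈ P ∧ 0 < p.2) ∧ {y | ∀ p ∈ s, p.1 (y - x) < p.2} ⊆ V := by
  induction hV with
  | basic u hu =>
    obtain ⟨ρ, hρ, c, ε, hε, rfl⟩ := hu
    intro x hx
    have hx' : ρ (x - c) < ε := hx
    refine ⟨{(ρ, ε - ρ (x - c))}, ?_, ?_⟩
    · intro p hp
      rw [Finset.mem_singleton] at hp
      subst hp
      exact ⟨hρ, tsub_pos_iff_lt.mpr hx'⟩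
    · intro y hy
      have h1 : ρ (y - x) < ε - ρ (x - c) := by
        simpa using hy (ρ, ε - ρ (x - c)) (Finset.mem_singleton_self _)
      have h2 : ρ (y - c) ≤ ρ (y - x) + ρ (x - c) := by
        have := (hP ρ hρ).2 (y - x) (x - c)
        simpa [sub_add_sub_cancel] using this
      have h3 : ρ (y - x) + ρ (x - c) < ε := lt_tsub_iff_right.mp h1
      exact lt_of_le_of_lt h2 h3
  | univ => exact fun x _ => ⟨∅, by simp, by simp⟩
  | inter u v _ _ ihu ihv =>
    intro x hx
    classical
    obtain ⟨s₁, hs₁, hsub₁⟩ := ihu x hx.1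
    obtain ⟨s₂, hs₂, hsub₂⟩ := ihv x hx.2
    refine ⟨s₁ ∪ s₂, ?_, ?_⟩
    · intro p hp
      rcases Finset.mem_union.mp hp with h | h
      exacts [hs₁ p h, hs₂ p h]
    · intro y hy
      exact ⟨hsub₁ fun p hp => hy p (Finset.mem_union_left _ hp),
             hsub₂ fun p hp => hy p (Finset.mem_union_right _ hp)⟩
  | sUnion S _ ih =>
    intro x hx
    obtain ⟨u, huS, hxu⟩ := hx
    obtain ⟨s, hs, hsub⟩ := ih u huS x hxu
    exact ⟨s, hs, hsub.trans (subset_sUnion_of_mem huS)⟩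

theorem nhds_zero_balls {P : Set (X → ℝ≥0∞)} (hP : ∀ ρ ∈ P, IsExtSeminorm ρ) {U : Set X}
    (hU : U ∈ @nhds X (elcsTopology P) 0) :
    ∃ s : Finset ((X → ℝ≥0∞) × ℝ≥0∞),
      (∀ p ∈ s, p.1 ∈ P ∧ 0 < p.2) ∧ {y | ∀ p ∈ s, p.1 y < p.2} ⊆ U := by
  letI := elcsTopology P
  obtain ⟨V, hVU, hVopen, h0V⟩ := mem_nhds_iff.mp hU
  obtain ⟨s, hs, hsub⟩ := exists_finite_balls hP hVopen 0 h0V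
  refine ⟨s, hs, ?_⟩
  intro y hy
  apply hVU
  apply hsub
  simpa using hy

theorem ball_set_mem_nhds {P : Set (X → ℝ≥0∞)} (hP : ∀ ρ ∈ P, IsExtSeminorm ρ)
    {s : Finset ((X → ℝ≥0∞) × ℝ≥0∞)} (hs : ∀ p ∈ s, p.1 ∈ P ∧ 0 < p.2) :
    {y : X | ∀ p ∈ s, p.1 y < p.2} ∈ @nhds X (elcsTopology P) 0 := by
  letI := elcsTopology P
  have hopen : IsOpen {y : X | ∀ p ∈ s, p.1 y < p.2} := by
    have : {y : X | ∀ p ∈ s, p.1 y < p.2} = ⋂ p ∈ s, {y : X | p.1 (y - 0) < p.2} := by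
      ext y; simp
    rw [this]
    exact isOpen_biInter_finset fun p hp => isOpen_ball (hs p hp).1 0 (hs p hp).2
  refine hopen.mem_nhds ?_
  intro p hp
  rw [(hP p.1 (hs p hp).1).map_zero]
  exact (hs p hp).2

theorem scaled_ball_subset {P : Set (X → ℝ≥0∞)} (hP : ∀ ρ ∈ P, IsExtSeminorm ρ)
    {s : Finset ((X → ℝ≥0∞) × ℝ≥0∞)} (hs : ∀ p ∈ s, p.1 ∈ P ∧ 0 < p.2)
    {r₁ r : ℝ} (h1 : 0 < r₁) (h2 : r₁ ≤ r) :
    r₁ • {y : X | ∀ p ∈ s, p.1 y < p.2} ⊆ r • {y : X | ∀ p ∈ s, p.1 y < p.2} := by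
  rintro _ ⟨w, hw, rfl⟩
  have hr : 0 < r := h1.trans_le h2
  refine ⟨(r₁ / r) • w, ?_, ?_⟩
  · intro p hp
    have := hw p hp
    rw [(hP p.1 (hs p hp).1).1]
    calc ENNReal.ofReal |r₁ / r| * p.1 w ≤ 1 * p.1 w := by
          apply mul_le_mul_left
          rw [ENNReal.ofReal_le_one, abs_of_pos (div_pos h1 hr)]
          exact div_le_one_of_le₀ h2 hr.le
      _ = p.1 w := one_mul _
      _ < p.2 := this
  · show r • ((r₁ / r) • w) = r₁ • w
    rw [smul_smul, mul_div_cancel₀ _ hr.ne']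

theorem bounded_of_finite {t : TopologicalSpace X} {A : Set X} (hA : A.Finite) :
    ElcsBounded t A := by
  intro U hU
  refine ⟨1, one_pos, A, hA, subset_rfl, fun x hx => ?_⟩
  exact Set.mem_add.mpr ⟨x, hx, (1:ℝ) • 0, ⟨0, mem_of_mem_nhds hU, rfl⟩, by simp⟩

theorem bounded_mono {t t' : TopologicalSpace X} (h : t ≤ t') {A : Set X}
    (hA : ElcsBounded t A) : ElcsBounded t' A := by
  intro U hU
  exact hA U (nhds_mono h hU)

theorem bounded_union {P : Set (X → ℝ≥0∞)} (hP : ∀ ρ ∈ P, IsExtSeminorm ρ) {A A' : Set X}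
    (hA : ElcsBounded (elcsTopology P) A) (hA' : ElcsBounded (elcsTopology P) A') :
    ElcsBounded (elcsTopology P) (A ∪ A') := by
  intro U hU
  obtain ⟨s, hs, hsub⟩ := nhds_zero_balls hP hU
  set W := {y : X | ∀ p ∈ s, p.1 y < p.2} with hW
  have hWnhds := ball_set_mem_nhds hP hs
  obtain ⟨r₁, hr₁, F₁, hF₁fin, hF₁sub, hcov₁⟩ := hA W hWnhds
  obtain ⟨r₂, hr₂, F₂, hF₂fin, hF₂sub, hcov₂⟩ := hA' W hWnhds
  refine ⟨max r₁ r₂, lt_max_of_lt_left hr₁, F₁ ∪ F₂, hF₁fin.union hF₂fin,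
    union_subset_union hF₁sub hF₂sub, ?_⟩
  have hsW : (max r₁ r₂) • W ⊆ (max r₁ r₂) • U := smul_set_mono hsub
  rintro x (hx | hx)
  · obtain ⟨f, hf, v, hv, rfl⟩ := Set.mem_add.mp (hcov₁ hx)
    exact Set.mem_add.mpr ⟨f, Set.mem_union_left _ hf, v,
      hsW (scaled_ball_subset hP hs hr₁ (le_max_left _ _) hv), rfl⟩
  · obtain ⟨f, hf, v, hv, rfl⟩ := Set.mem_add.mp (hcov₂ hx)
    exact Set.mem_add.mpr ⟨f, Set.mem_union_right _ hf, v,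
      hsW (scaled_ball_subset hP hs hr₂ (le_max_right _ _) hv), rfl⟩

theorem bounded_smul_image {P : Set (X → ℝ≥0∞)} (hP : ∀ ρ ∈ P, IsExtSeminorm ρ) {A : Set X}
    (hA : ElcsBounded (elcsTopology P) A) (c : ℝ) :
    ElcsBounded (elcsTopology P) ((fun x => c • x) '' A) := by
  rcases eq_or_ne c 0 with rfl | hc
  · apply bounded_of_finite
    apply Set.Finite.subset (Set.finite_singleton (0 : X))
    rintro _ ⟨x, _, rfl⟩; simp
  · intro U hU
    letI := elcsTopology P
    have hcont := continuous_smul_const hP hc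
    have hV : (fun x : X => c • x) ⁻¹' U ∈ 𝓝 (0 : X) := by
      have h0 : (fun x : X => c • x) 0 = 0 := smul_zero c
      have h2 := hcont.continuousAt (x := (0:X))
      rw [ContinuousAt] at h2
      rw [smul_zero] at h2
      exact h2 hU
    obtain ⟨r, hr, F, hFfin, hFsub, hcov⟩ := hA _ hV
    refine ⟨r, hr, (fun x => c • x) '' F, hFfin.image _, Set.image_mono hFsub, ?_⟩
    rintro _ ⟨x, hx, rfl⟩
    obtain ⟨f, hf, v, hv, rfl⟩ := Set.mem_add.mp (hcov hx)
    obtain ⟨w, hw, rfl⟩ := hv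
    refine Set.mem_add.mpr ⟨c • f, Set.mem_image_of_mem _ hf, r • (c • w), ⟨c • w, hw, rfl⟩, ?_⟩
    show c • f + r • c • w = c • (f + r • w)
    rw [smul_add, smul_comm]

end ElcsAux
end Aux2
section Aux3

open Topology Filter Set

variable {X : Type*} [AddCommGroup X] [Module ℝ X]

namespace ElcsAux

/-- A seminorm whose balls are open for `t` is bounded on every `tF`-bounded set. -/
theorem semibound {P : Set (X → ℝ≥0∞)} {tF : TopologicalSpace X}
    (hF : IsFlcTopology (elcsTopology P) tF)
    (q : Seminorm ℝ X)
    (hq : ∀ (c : X) (ε : ℝ), 0 < ε → IsOpen[elcsTopology P] {x | q (x - c) < ε})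
    {B : Set X} (hB : ElcsBounded tF B) :
    ∃ C : ℝ, 0 ≤ C ∧ ∀ x ∈ B, q x ≤ C := by
  set fam : SeminormFamily ℝ X (Fin 1) := fun _ => q with hfam
  set t' : TopologicalSpace X := fam.moduleFilterBasis.topology with ht'
  have hws : @WithSeminorms ℝ X (Fin 1) _ _ _ fam t' := ⟨rfl⟩
  have htag : @IsTopologicalAddGroup X t' _ := hws.topologicalAddGroup
  have hsmul : @ContinuousSMul ℝ X _ _ t' := hws.continuousSMul
  have hlcs : @LocallyConvexSpace ℝ X _ _ _ _ t' := hws.toLocallyConvexSpace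
  have hle : elcsTopology P ≤ t' := by
    rw [TopologicalSpace.le_def]
    intro O hO
    have hcover : ∀ x ∈ O, ∃ T : Set X, IsOpen[elcsTopology P] T ∧ x ∈ T ∧ T ⊆ O := by
      intro x hx
      have hOx : O ∈ @nhds X t' x := @IsOpen.mem_nhds X t' x O hO hx
      obtain ⟨⟨s, r⟩, hr, hsub⟩ := (hws.hasBasis_ball).mem_iff.mp hOx
      refine ⟨{y | q (y - x) < r}, hq x r hr, by simp [hr], ?_⟩
      intro y hy
      apply hsub
      have hball : y ∈ q.ball x r := hy
      exact Seminorm.ball_antitone (Finset.sup_le fun i _ => le_rfl) hball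
    choose! T hTopen hTmem hTsub using hcover
    have hO' : O = ⋃₀ ((fun x => T x) '' O) := by
      apply Set.Subset.antisymm
      · intro x hx
        exact ⟨T x, Set.mem_image_of_mem _ hx, hTmem x hx⟩
      · rintro y ⟨_, ⟨x, hx, rfl⟩, hyT⟩
        exact hTsub x hx hyT
    rw [hO']
    exact TopologicalSpace.GenerateOpen.sUnion _ (by rintro _ ⟨x, hx, rfl⟩; exact hTopen x hx)
  have hFle : tF ≤ t' := hF.2.2.2.2 t' hle htag hsmul hlcs
  have hUnhds : q.ball 0 1 ∈ @nhds X tF 0 := by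
    apply nhds_mono hFle
    apply hws.hasBasis.mem_of_mem
    have h1 := fam.basisSets_mem ({0} : Finset (Fin 1)) (one_pos (α := ℝ))
    rwa [Finset.sup_singleton] at h1
  obtain ⟨r, hr, F, hFfin, hFsub, hcov⟩ := hB _ hUnhds
  obtain ⟨CF, hCF⟩ : ∃ CF : ℝ, ∀ f ∈ F, q f ≤ CF := by
    rcases F.eq_empty_or_nonempty with rfl | hFne
    · exact ⟨0, by simp⟩
    · obtain ⟨CF, hCF⟩ := (hFfin.image q).bddAbove
      exact ⟨CF, fun f hf => hCF (Set.mem_image_of_mem q hf)⟩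
  refine ⟨max CF 0 + r, by positivity, ?_⟩
  intro x hx
  obtain ⟨f, hf, v, hv, rfl⟩ := Set.mem_add.mp (hcov hx)
  obtain ⟨u, hu, rfl⟩ := hv
  have hqu : q u < 1 := by simpa [Seminorm.mem_ball_zero] using hu
  calc q (f + r • u) ≤ q f + q (r • u) := map_add_le_add q f _
    _ = q f + |r| * q u := by rw [map_smul_eq_mul]; rfl
    _ ≤ max CF 0 + r * 1 := by
        apply add_le_add ((hCF f hf).trans (le_max_left _ _))
        rw [abs_of_pos hr]
        exact mul_le_mul_of_nonneg_left hqu.le hr.le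
    _ = max CF 0 + r := by ring

end ElcsAux
end Aux3
section Aux4

open Set Function

namespace ElcsAux

/-- A set on which every linear functional is bounded is contained in a bounded "box" of a
finite-dimensional subspace. -/
theorem boxbound {Y : Type*} [AddCommGroup Y] [Module ℝ Y] (S : Set Y)
    (hb : ∀ φ : Y →ₗ[ℝ] ℝ, ∃ C : ℝ, ∀ y ∈ S, |φ y| ≤ C) :
    ∃ (k : ℕ) (m : Fin k → Y) (c : ℝ), 0 ≤ c ∧
      ∀ y ∈ S, ∃ a : Fin k → ℝ, (y = ∑ i, a i • m i) ∧ ∀ i, |a i| ≤ c := by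
  classical
  have hfd : FiniteDimensional ℝ (Submodule.span ℝ S) := by
    by_contra hnf
    obtain ⟨b, hbS, hbspan, hli⟩ := exists_linearIndependent ℝ S
    replace hli : LinearIndepOn ℝ id b := hli
    have hbinf : b.Infinite := by
      intro hbfin
      have : FiniteDimensional ℝ (Submodule.span ℝ b) := FiniteDimensional.span_of_finite ℝ hbfin
      rw [hbspan] at this
      exact hnf this
    let e : ℕ ↪ b := hbinf.natEmbedding
    set v : ℕ → Y := fun n => ((e n : Y)) with hv
    have hvinj : Function.Injective v := by
      intro n m hnm
      exact e.injective (Subtype.val_injective hnm)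
    let bi := Module.Basis.extend hli
    let g : hli.extend (Set.subset_univ b) → ℝ := fun x =>
      if hx : (x : Y) ∈ Set.range v then ((Function.invFun v (x : Y) : ℕ) : ℝ) else 0
    let φ : Y →ₗ[ℝ] ℝ := bi.constr ℝ g
    have hφv : ∀ n : ℕ, φ (v n) = n := by
      intro n
      have hmem : v n ∈ hli.extend (Set.subset_univ b) :=
        hli.subset_extend _ (e n).2
      have h1 : φ (bi ⟨v n, hmem⟩) = g ⟨v n, hmem⟩ := bi.constr_basis ℝ g _
      rw [Module.Basis.extend_apply_self] at h1
      rw [h1]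
      have hr : (v n : Y) ∈ Set.range v := ⟨n, rfl⟩
      simp only [g, dif_pos hr]
      rw [Function.leftInverse_invFun hvinj n]
    obtain ⟨C, hC⟩ := hb φ
    obtain ⟨n, hn⟩ := exists_nat_gt C
    have hmemS : v n ∈ S := hbS (e n).2
    have := hC (v n) hmemS
    rw [hφv n] at this
    have : (n : ℝ) ≤ C := (le_abs_self _).trans this
    linarith
  set N := Submodule.span ℝ S with hN
  set k := Module.finrank ℝ N with hk
  let bs : Module.Basis (Fin k) ℝ N := Module.finBasis ℝ N
  choose φ hφ using fun i : Fin k => LinearMap.exists_extend (bs.coord i)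
  choose C hC using fun i : Fin k => hb (φ i)
  refine ⟨k, fun i => (bs i : Y), ∑ i, |C i|, Finset.sum_nonneg fun i _ => abs_nonneg _, ?_⟩
  intro y hy
  set ys : N := ⟨y, Submodule.subset_span hy⟩ with hys
  refine ⟨fun i => bs.repr ys i, ?_, ?_⟩
  · have h1 := bs.sum_repr ys
    have h2 := congrArg (Submodule.subtype N) h1
    rw [map_sum] at h2
    simp only [Submodule.subtype_apply, Submodule.coe_smul] at h2 ⊢
    exact h2.symm
  · intro i
    have h3 : φ i y = bs.repr ys i := by
      have := congrArg (fun ψ => ψ ys) (hφ i)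
      simpa [Module.Basis.coord_apply] using this
    have h4 := hC i y hy
    rw [h3] at h4
    calc |bs.repr ys i| ≤ C i := h4
      _ ≤ |C i| := le_abs_self _
      _ ≤ ∑ j, |C j| := Finset.single_le_sum (fun j _ => abs_nonneg (C j)) (Finset.mem_univ i)

end ElcsAux
end Aux4
section Aux5

open Topology Filter Set

variable {X : Type*} [AddCommGroup X] [Module ℝ X]

namespace ElcsAux

theorem isOpen_of_nbhds {Y : Type*} {t : TopologicalSpace Y} {O : Set Y}
    (h : ∀ x ∈ O, ∃ T : Set Y, IsOpen[t] T ∧ x ∈ T ∧ T ⊆ O) : IsOpen[t] O := by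
  letI := t
  choose! T hTopen hTmem hTsub using h
  have hO' : O = ⋃₀ ((fun x => T x) '' O) := by
    apply Set.Subset.antisymm
    · intro x hx
      exact ⟨T x, Set.mem_image_of_mem _ hx, hTmem x hx⟩
    · rintro y ⟨_, ⟨x, hx, rfl⟩, hyT⟩
      exact hTsub x hx hyT
  rw [hO']
  exact isOpen_sUnion (by rintro _ ⟨x, hx, rfl⟩; exact hTopen x hx)

theorem le_sup_of_mem {A : Set X} {g : X → ℝ≥0∞} {z : X} (hz : z ∈ A) :
    g z ≤ ⨆ x ∈ A, g x :=
  le_iSup₂ (f := fun x (_ : x ∈ A) => g x) z hz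

theorem sup_smul_image (A : Set X) (h : X →ₗ[ℝ] ℝ) {r : ℝ} (hr : 0 ≤ r) :
    (⨆ z ∈ (fun x => r • x) '' A, ENNReal.ofReal |h z|) =
      ENNReal.ofReal r * ⨆ x ∈ A, ENNReal.ofReal |h x| := by
  rw [iSup_image]
  have heq : ∀ x : X, ENNReal.ofReal |h (r • x)| = ENNReal.ofReal r * ENNReal.ofReal |h x| := by
    intro x
    rw [map_smul, smul_eq_mul, abs_mul, abs_of_nonneg hr, ENNReal.ofReal_mul hr]
  simp_rw [heq]
  rw [ENNReal.mul_iSup]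
  exact iSup_congr fun x => (ENNReal.mul_iSup _ _).symm

theorem add_le_sup_two (a b : ℝ≥0∞) : a + b ≤ (2 * a) ⊔ (2 * b) := by
  rcases le_total a b with h | h
  · calc a + b ≤ b + b := add_le_add_left h b
      _ = 2 * b := (two_mul b).symm
      _ ≤ (2 * a) ⊔ (2 * b) := le_sup_right
  · calc a + b ≤ a + a := add_le_add_right h a
      _ = 2 * a := (two_mul a).symm
      _ ≤ (2 * a) ⊔ (2 * b) := le_sup_left

theorem extsem_sub_le {ρ : X → ℝ≥0∞} (h : IsExtSeminorm ρ) (x y : X) :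
    ρ (x - y) ≤ ρ x + ρ y := by
  rw [sub_eq_add_neg]
  exact (h.2 x (-y)).trans (by rw [extsem_neg h])

/-- The main dominance lemma: every `tF`-bounded set is dominated, for the sup-seminorms of
linear functionals, by a `t`-bounded set. -/
theorem dominance {P : Set (X → ℝ≥0∞)} (hsem : ∀ ρ ∈ P, IsExtSeminorm ρ)
    {tF : TopologicalSpace X} (hF : IsFlcTopology (elcsTopology P) tF)
    {ρf : X → ℝ≥0∞} (hρfsem : IsExtSeminorm ρf)
    (hρfcont : Continuous[elcsTopology P, _] ρf)
    (hXfeq : ((XfinSubmodule (elcsTopology P)) : Set X) = {x | ρf x < ⊤})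
    (M : Submodule ℝ X) (hM : IsCompl (XfinSubmodule (elcsTopology P)) M)
    {B : Set X} (hB : ElcsBounded tF B) :
    ∃ D : Set X, ElcsBounded (elcsTopology P) D ∧
      ∀ h : X →ₗ[ℝ] ℝ, (⨆ x ∈ B, ENNReal.ofReal |h x|) ≤ ⨆ x ∈ D, ENNReal.ofReal |h x| := by
  classical
  set Xf := XfinSubmodule (elcsTopology P) with hXfdef
  have hXfopen : IsOpen[elcsTopology P] (Xf : Set X) := by
    rw [hXfeq]
    exact @Continuous.isOpen_preimage X ℝ≥0∞ (elcsTopology P) _ ρf hρfcont _ isOpen_Iio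
  set π := Xf.linearProjOfIsCompl M hM with hπ
  set Plin : X →ₗ[ℝ] X := Xf.subtype.comp π with hPlin
  have hPmem : ∀ x : X, Plin x ∈ Xf := fun x => (π x).2
  have hPleft : ∀ w : X, w ∈ Xf → Plin w = w := by
    intro w hw
    show ((π w : Xf) : X) = w
    have h1 : π w = ⟨w, hw⟩ := Submodule.linearProjOfIsCompl_apply_left hM ⟨w, hw⟩
    rw [h1]
  have hfin : ∀ ρ ∈ P, ∀ z : X, ρ (Plin z) ≠ ⊤ := by
    intro ρ hρ z
    exact ((hPmem z) ρ (hsem ρ hρ) (continuous_mem hsem hρ)).ne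
  -- Part A': bound for every member seminorm composed with the projection
  have hsemibound_rho : ∀ ρ ∈ P, ∃ C : ℝ, 0 ≤ C ∧
      ∀ x ∈ B, ρ (Plin x) ≤ ENNReal.ofReal C := by
    intro ρ hρ
    have hρsem := hsem ρ hρ
    set q : Seminorm ℝ X := Seminorm.of (fun x => (ρ (Plin x)).toReal)
      (by
        intro x y
        show (ρ (Plin (x + y))).toReal ≤ (ρ (Plin x)).toReal + (ρ (Plin y)).toReal
        have h1 : ρ (Plin (x + y)) ≤ ρ (Plin x) + ρ (Plin y) := by
          rw [map_add]; exact hρsem.2 _ _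
        calc (ρ (Plin (x + y))).toReal ≤ (ρ (Plin x) + ρ (Plin y)).toReal :=
              ENNReal.toReal_mono
                (ENNReal.add_ne_top.mpr ⟨hfin ρ hρ x, hfin ρ hρ y⟩) h1
          _ = (ρ (Plin x)).toReal + (ρ (Plin y)).toReal :=
              ENNReal.toReal_add (hfin ρ hρ x) (hfin ρ hρ y))
      (by
        intro a x
        show (ρ (Plin (a • x))).toReal = ‖a‖ * (ρ (Plin x)).toReal
        rw [map_smul, hρsem.1, ENNReal.toReal_mul, ENNReal.toReal_ofReal (abs_nonneg a),
          Real.norm_eq_abs]) with hq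
    have hqball : ∀ (c : X) (ε : ℝ), 0 < ε →
        IsOpen[elcsTopology P] {x | q (x - c) < ε} := by
      intro c ε hε
      have hfin' : ∀ x : X, ρ (Plin x - Plin c) ≠ ⊤ := by
        intro x; rw [← map_sub]; exact hfin ρ hρ _
      have hset : {x | q (x - c) < ε} = {x | ρ (Plin x - Plin c) < ENNReal.ofReal ε} := by
        ext x
        show (ρ (Plin (x - c))).toReal < ε ↔ _
        rw [map_sub]
        exact (ENNReal.lt_ofReal_iff_toReal_lt (hfin' x)).symm
      rw [hset]
      apply isOpen_of_nbhds
      intro x hx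
      have hvlt : ρ (Plin x - Plin c) < ENNReal.ofReal ε := hx
      have hvne : ρ (Plin x - Plin c) ≠ ⊤ := hfin' x
      refine ⟨{y | ρ (y - x) < ENNReal.ofReal ε - ρ (Plin x - Plin c)} ∩
        {y | y - x ∈ (Xf : Set X)},
        TopologicalSpace.GenerateOpen.inter _ _
          (isOpen_ball hρ x (tsub_pos_iff_lt.mpr hvlt))
          (isOpen_translate hXfopen x), ⟨?_, ?_⟩, ?_⟩
      · show ρ (x - x) < _
        rw [sub_self, hρsem.map_zero]
        exact tsub_pos_iff_lt.mpr hvlt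
      · show x - x ∈ (Xf : Set X)
        rw [sub_self]; exact Xf.zero_mem
      · rintro y ⟨h1, h2⟩
        show ρ (Plin y - Plin c) < ENNReal.ofReal ε
        have hyx : Plin y = Plin x + (y - x) := by
          have h3 : Plin y = Plin (x + (y - x)) := by rw [add_sub_cancel]
          rw [h3, map_add, hPleft _ h2]
        rw [hyx, show Plin x + (y - x) - Plin c = (Plin x - Plin c) + (y - x) by abel]
        calc ρ (Plin x - Plin c + (y - x)) ≤ ρ (Plin x - Plin c) + ρ (y - x) := hρsem.2 _ _
          _ < ρ (Plin x - Plin c) + (ENNReal.ofReal ε - ρ (Plin x - Plin c)) :=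
              ENNReal.add_lt_add_left hvne h1
          _ = ENNReal.ofReal ε := add_tsub_cancel_of_le hvlt.le
    obtain ⟨C, hC0, hC⟩ := semibound hF q hqball hB
    refine ⟨C, hC0, fun x hx => ?_⟩
    exact (ENNReal.le_ofReal_iff_toReal_le (hfin ρ hρ x) hC0).mpr (hC x hx)
  -- Part B': bound for linear functionals composed with the complementary projection
  have hsemibound_phi : ∀ φ : X →ₗ[ℝ] ℝ, ∃ C : ℝ, ∀ x ∈ B, |φ (x - Plin x)| ≤ C := by
    intro φ
    set Qlin : X →ₗ[ℝ] X := LinearMap.id - Plin with hQlin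
    have hQapp : ∀ x : X, Qlin x = x - Plin x := fun x => rfl
    have hQXf : ∀ w : X, w ∈ Xf → Qlin w = 0 := by
      intro w hw
      rw [hQapp, hPleft w hw, sub_self]
    set q : Seminorm ℝ X := Seminorm.of (fun x => |φ (Qlin x)|)
      (by
        intro x y
        show |φ (Qlin (x + y))| ≤ |φ (Qlin x)| + |φ (Qlin y)|
        rw [map_add, map_add]; exact abs_add_le _ _)
      (by
        intro a x
        show |φ (Qlin (a • x))| = ‖a‖ * |φ (Qlin x)|
        rw [map_smul, map_smul, smul_eq_mul, abs_mul, Real.norm_eq_abs]) with hqdef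
    have hqball : ∀ (c : X) (ε : ℝ), 0 < ε →
        IsOpen[elcsTopology P] {x | q (x - c) < ε} := by
      intro c ε hε
      apply isOpen_of_nbhds
      intro x hx
      refine ⟨{y | y - x ∈ (Xf : Set X)}, isOpen_translate hXfopen x, ?_, ?_⟩
      · show x - x ∈ (Xf : Set X); rw [sub_self]; exact Xf.zero_mem
      · intro y hy
        show |φ (Qlin (y - c))| < ε
        have heq : Qlin (y - c) = Qlin (x - c) := by
          have h1 : Qlin (y - c) - Qlin (x - c) = Qlin (y - x) := by
            rw [← map_sub]; congr 1; abel
          have h2 : Qlin (y - x) = 0 := hQXf _ hy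
          rw [h2] at h1
          exact sub_eq_zero.mp h1
        rw [heq]
        exact hx
    obtain ⟨C, _, hC⟩ := semibound hF q hqball hB
    exact ⟨C, fun x hx => hC x hx⟩
  -- Part A: the projected image is bounded
  have hD1 : ElcsBounded (elcsTopology P) ((fun x => Plin x) '' B) := by
    intro U hU
    obtain ⟨s, hs, hsub⟩ := nhds_zero_balls hsem hU
    have hCex : ∀ p ∈ s, ∃ C : ℝ, 0 ≤ C ∧ ∀ x ∈ B, p.1 (Plin x) ≤ ENNReal.ofReal C :=
      fun p hp => hsemibound_rho p.1 (hs p hp).1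
    choose! C hC0 hCb using hCex
    have hrex : ∀ p ∈ s, ∃ r : ℝ, 0 < r ∧
        ENNReal.ofReal (2 * C p) < ENNReal.ofReal r * p.2 := by
      intro p hp
      rcases eq_or_ne p.2 ⊤ with htop | hne
      · refine ⟨1, one_pos, ?_⟩
        rw [htop, ENNReal.ofReal_one, one_mul]
        exact ENNReal.ofReal_lt_top
      · have hp2pos : (0:ℝ) < p.2.toReal := ENNReal.toReal_pos (hs p hp).2.ne' hne
        have hCp0 : (0:ℝ) ≤ C p := hC0 p hp
        refine ⟨(2 * C p + 1) / p.2.toReal, div_pos (by linarith) hp2pos, ?_⟩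
        have hkey : ENNReal.ofReal ((2 * C p + 1) / p.2.toReal) * p.2
            = ENNReal.ofReal (2 * C p + 1) := by
          rw [ENNReal.ofReal_div_of_pos hp2pos, ENNReal.ofReal_toReal hne,
            ENNReal.div_mul_cancel (hs p hp).2.ne' hne]
        rw [hkey]
        exact (ENNReal.ofReal_lt_ofReal_iff (by linarith)).mpr (by linarith)
    choose! r hr0 hrle using hrex
    set R : ℝ := 1 + ∑ p ∈ s, r p with hR
    have hrR : ∀ p ∈ s, r p ≤ R := by
      intro p hp
      have h1 : r p ≤ ∑ q ∈ s, r q :=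
        Finset.single_le_sum (fun q hq => (hr0 q hq).le) hp
      linarith
    have hRpos : (0:ℝ) < R := by
      have h1 : (0:ℝ) ≤ ∑ p ∈ s, r p := Finset.sum_nonneg fun q hq => (hr0 q hq).le
      linarith
    rcases B.eq_empty_or_nonempty with rfl | ⟨x0, hx0⟩
    · refine ⟨1, one_pos, ∅, finite_empty, Set.empty_subset _, by simp⟩
    · refine ⟨R, hRpos, {Plin x0}, Set.finite_singleton _, ?_, ?_⟩
      · intro z hz
        rw [Set.mem_singleton_iff] at hz
        exact hz ▸ Set.mem_image_of_mem _ hx0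
      · rintro _ ⟨x, hx, rfl⟩
        apply Set.mem_add.mpr
        have hofR : ENNReal.ofReal R⁻¹ = (ENNReal.ofReal R)⁻¹ := ENNReal.ofReal_inv_of_pos hRpos
        have hne0 : ENNReal.ofReal R ≠ 0 := (ENNReal.ofReal_pos.mpr hRpos).ne'
        have hnetop : ENNReal.ofReal R ≠ ⊤ := ENNReal.ofReal_ne_top
        refine ⟨Plin x0, Set.mem_singleton _, R • (R⁻¹ • (Plin x - Plin x0)), ?_, ?_⟩
        · apply Set.smul_mem_smul_set
          apply hsub
          intro p hp
          show p.1 (R⁻¹ • (Plin x - Plin x0)) < p.2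
          have hpsem := hsem p.1 (hs p hp).1
          rw [hpsem.1]
          have hbound : p.1 (Plin x - Plin x0) ≤ ENNReal.ofReal (2 * C p) := by
            calc p.1 (Plin x - Plin x0) ≤ p.1 (Plin x) + p.1 (Plin x0) := extsem_sub_le hpsem _ _
              _ ≤ ENNReal.ofReal (C p) + ENNReal.ofReal (C p) :=
                  add_le_add (hCb p hp x hx) (hCb p hp x0 hx0)
              _ = ENNReal.ofReal (2 * C p) := by
                  rw [← ENNReal.ofReal_add (hC0 p hp) (hC0 p hp)]; ring_nf
          have h2 : ENNReal.ofReal (2 * C p) < ENNReal.ofReal R * p.2 :=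
            lt_of_lt_of_le (hrle p hp)
              (mul_le_mul_left (ENNReal.ofReal_le_ofReal (hrR p hp)) _)
          have hinv0 : (ENNReal.ofReal R)⁻¹ ≠ 0 := ENNReal.inv_ne_zero.mpr hnetop
          have hinvtop : (ENNReal.ofReal R)⁻¹ ≠ ⊤ := ENNReal.inv_ne_top.mpr hne0
          calc ENNReal.ofReal |R⁻¹| * p.1 (Plin x - Plin x0)
              ≤ ENNReal.ofReal |R⁻¹| * ENNReal.ofReal (2 * C p) := mul_le_mul_right hbound _
            _ < ENNReal.ofReal |R⁻¹| * (ENNReal.ofReal R * p.2) := by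
                rw [abs_of_pos (inv_pos.mpr hRpos), hofR]
                exact (ENNReal.mul_lt_mul_iff_right hinv0 hinvtop).mpr h2
            _ = p.2 := by
                rw [abs_of_pos (inv_pos.mpr hRpos), hofR, ← mul_assoc,
                  ENNReal.inv_mul_cancel hne0 hnetop, one_mul]
        · rw [smul_inv_smul₀ hRpos.ne']
          abel
  -- Part B: the box bound
  have hφS : ∀ φ : X →ₗ[ℝ] ℝ, ∃ C : ℝ, ∀ y ∈ (fun x => x - Plin x) '' B, |φ y| ≤ C := by
    intro φ
    obtain ⟨C, hC⟩ := hsemibound_phi φ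
    refine ⟨C, ?_⟩
    rintro _ ⟨x, hx, rfl⟩
    exact hC x hx
  obtain ⟨k, m, c, hc0, hrep⟩ := boxbound _ hφS
  set D2 : Set X := Set.range (fun i : Fin k => c • m i) with hD2
  set D : Set X := (fun z => (2:ℝ) • z) '' ((fun x => Plin x) '' B) ∪
      (fun z => ((2:ℝ) * k) • z) '' D2 with hD
  refine ⟨D, ?_, ?_⟩
  · exact bounded_union hsem (bounded_smul_image hsem hD1 2)
      (bounded_smul_image hsem (bounded_of_finite (Set.finite_range _)) _)
  · intro h
    set s1 := ⨆ z ∈ (fun x => Plin x) '' B, ENNReal.ofReal |h z| with hs1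
    set s2 := ⨆ z ∈ D2, ENNReal.ofReal |h z| with hs2
    have hptwise : ∀ x ∈ B, ENNReal.ofReal |h x| ≤ s1 + (k : ℝ≥0∞) * s2 := by
      intro x hx
      have hdecomp : h x = h (Plin x) + h (x - Plin x) := by
        rw [← map_add]; congr 1; abel
      have habs : |h x| ≤ |h (Plin x)| + |h (x - Plin x)| := by
        rw [hdecomp]; exact abs_add_le _ _
      have hPle : ENNReal.ofReal |h (Plin x)| ≤ s1 :=
        le_sup_of_mem (Set.mem_image_of_mem _ hx)
      have hQle : ENNReal.ofReal |h (x - Plin x)| ≤ (k:ℝ≥0∞) * s2 := by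
        obtain ⟨a, hya, hab⟩ := hrep _ (Set.mem_image_of_mem (fun x => x - Plin x) hx)
        have hya' : x - Plin x = ∑ i, a i • m i := hya
        have h1 : |h (x - Plin x)| ≤ ∑ i, |h (c • m i)| := by
          rw [hya', map_sum]
          refine (Finset.abs_sum_le_sum_abs _ _).trans ?_
          apply Finset.sum_le_sum
          intro i _
          rw [map_smul, smul_eq_mul, abs_mul, map_smul, smul_eq_mul, abs_mul,
            abs_of_nonneg hc0]
          exact mul_le_mul_of_nonneg_right (hab i) (abs_nonneg _)
        calc ENNReal.ofReal |h (x - Plin x)| ≤ ENNReal.ofReal (∑ i, |h (c • m i)|) :=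
              ENNReal.ofReal_le_ofReal h1
          _ ≤ ∑ i, ENNReal.ofReal |h (c • m i)| :=
              le_of_eq (ENNReal.ofReal_sum_of_nonneg (fun i _ => abs_nonneg _))
          _ ≤ ∑ _i : Fin k, s2 := Finset.sum_le_sum (fun i _ => le_sup_of_mem ⟨i, rfl⟩)
          _ = (k:ℝ≥0∞) * s2 := by
              rw [Finset.sum_const, Finset.card_univ, Fintype.card_fin, nsmul_eq_mul]
      calc ENNReal.ofReal |h x| ≤ ENNReal.ofReal (|h (Plin x)| + |h (x - Plin x)|) :=
            ENNReal.ofReal_le_ofReal habs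
        _ ≤ ENNReal.ofReal |h (Plin x)| + ENNReal.ofReal |h (x - Plin x)| :=
            ENNReal.ofReal_add_le
        _ ≤ s1 + (k:ℝ≥0∞) * s2 := add_le_add hPle hQle
    refine iSup₂_le fun x hx => (hptwise x hx).trans ?_
    rw [hD, iSup_union]
    rw [sup_smul_image _ h (by norm_num : (0:ℝ) ≤ 2),
      sup_smul_image _ h (by positivity : (0:ℝ) ≤ 2 * k)]
    have h2 : ENNReal.ofReal (2:ℝ) = 2 := by
      rw [show (2:ℝ≥0∞) = ENNReal.ofReal (2:ℝ) by norm_num]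
    have h2k : ENNReal.ofReal (2 * (k:ℝ)) = 2 * (k:ℝ≥0∞) := by
      rw [ENNReal.ofReal_mul (by norm_num), h2, ENNReal.ofReal_natCast]
    rw [h2, h2k]
    calc s1 + (k:ℝ≥0∞) * s2 ≤ (2 * s1) ⊔ (2 * ((k:ℝ≥0∞) * s2)) := add_le_sup_two _ _
      _ = (2 * s1) ⊔ (2 * (k:ℝ≥0∞) * s2) := by rw [mul_assoc]

end ElcsAux
end Aux5

/-- for a fundamental elcs with `X = X_fin ⊕ M`, the topology of uniform
convergence on `τ`-bounded sets equals that of uniform convergence on `τ_F`-bounded sets. -/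
theorem stmt19 {X : Type*} [AddCommGroup X] [Module ℝ X]
    (t tF : TopologicalSpace X) (P : Set (X → ℝ≥0∞)) (hP : IsELCS t P)
    (hF : IsFlcTopology t tF)
    (hfund : ∃ ρ : X → ℝ≥0∞, IsExtSeminorm ρ ∧ @Continuous X ℝ≥0∞ t _ ρ ∧
      (XfinSubmodule t : Set X) = {x | ρ x < ⊤})
    (M : Submodule ℝ X) (hM : IsCompl (XfinSubmodule t) M) :
    ucTopology t {B : Set X | ElcsBounded t B} =
      ucTopology t {B : Set X | ElcsBounded tF B} := by
  obtain ⟨hsem, rfl⟩ := hP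
  obtain ⟨ρf, hρfsem, hρfcont, hXfeq⟩ := hfund
  apply le_antisymm
  · -- the hard direction
    rw [ucTopology]
    apply le_generateFrom
    rintro O ⟨B, hB, g, ε, hε, rfl⟩
    have hBb : ElcsBounded tF B := hB
    obtain ⟨D, hD, hdom⟩ := ElcsAux.dominance hsem hF hρfsem hρfcont hXfeq M hM hBb
    apply ElcsAux.isOpen_of_nbhds
    intro f0 hf0
    have hsup0 : (⨆ x ∈ B, ENNReal.ofReal |f0.1 x - g.1 x|) < ε := hf0
    set sup0 := ⨆ x ∈ B, ENNReal.ofReal |f0.1 x - g.1 x| with hsup0def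
    have hsup0ne : sup0 ≠ ⊤ := hsup0.ne_top
    set δ : ℝ≥0∞ := ε - sup0 with hδ
    have hδpos : 0 < δ := tsub_pos_iff_lt.mpr hsup0
    refine ⟨{f | (⨆ x ∈ D, ENNReal.ofReal |f.1 x - f0.1 x|) < δ},
      TopologicalSpace.GenerateOpen.basic _ ⟨D, hD, f0, δ, hδpos, rfl⟩, ?_, ?_⟩
    · show (⨆ x ∈ D, ENNReal.ofReal |f0.1 x - f0.1 x|) < δ
      simpa using hδpos
    · intro f hf
      have hfD : (⨆ x ∈ D, ENNReal.ofReal |f.1 x - f0.1 x|) < δ := hf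
      show (⨆ x ∈ B, ENNReal.ofReal |f.1 x - g.1 x|) < ε
      have hdom' := hdom (f.1 - f0.1)
      simp only [LinearMap.sub_apply] at hdom'
      have step1 : (⨆ x ∈ B, ENNReal.ofReal |f.1 x - g.1 x|) ≤
          (⨆ x ∈ B, ENNReal.ofReal |f.1 x - f0.1 x|) + sup0 := by
        refine iSup₂_le fun x hx => ?_
        have habs : |f.1 x - g.1 x| ≤ |f.1 x - f0.1 x| + |f0.1 x - g.1 x| := by
          have : f.1 x - g.1 x = (f.1 x - f0.1 x) + (f0.1 x - g.1 x) := by ring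
          rw [this]; exact abs_add_le _ _
        calc ENNReal.ofReal |f.1 x - g.1 x|
            ≤ ENNReal.ofReal (|f.1 x - f0.1 x| + |f0.1 x - g.1 x|) :=
              ENNReal.ofReal_le_ofReal habs
          _ ≤ ENNReal.ofReal |f.1 x - f0.1 x| + ENNReal.ofReal |f0.1 x - g.1 x| :=
              ENNReal.ofReal_add_le
          _ ≤ (⨆ x ∈ B, ENNReal.ofReal |f.1 x - f0.1 x|) + sup0 :=
              add_le_add (ElcsAux.le_sup_of_mem hx) (ElcsAux.le_sup_of_mem hx)
      have step2 : (⨆ x ∈ B, ENNReal.ofReal |f.1 x - f0.1 x|) ≤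
          ⨆ x ∈ D, ENNReal.ofReal |f.1 x - f0.1 x| := hdom'
      calc (⨆ x ∈ B, ENNReal.ofReal |f.1 x - g.1 x|)
          ≤ (⨆ x ∈ D, ENNReal.ofReal |f.1 x - f0.1 x|) + sup0 :=
            step1.trans (add_le_add_left step2 _)
        _ < δ + sup0 := by
            rw [add_comm _ sup0, add_comm δ sup0]
            exact ENNReal.add_lt_add_left hsup0ne hfD
        _ = ε := tsub_add_cancel_of_le hsup0.le
  · -- the easy direction: every `t`-bounded set is `tF`-bounded
    apply TopologicalSpace.generateFrom_anti
    rintro s ⟨B, hB, g, ε, hε, rfl⟩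
    exact ⟨B, ElcsAux.bounded_mono hF.1 hB, g, ε, hε, rfl⟩
end
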